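/- arXiv:2111.12404 — 8 statements merged into one kernel-verified Lean document; each statement's English description precedes it below -/
import Mathlib

section
/- For every real x > 0, Σ_{k=1}^∞ x^k / (k · Γ(2k+1)) = 2 ∫₀^{√x} (cosh t − 1)/t dt. Equivalently, since E_{2,1}(t) = cosh(√t), the integral Mittag-Leffler function Ei_{2,1}(x) = ∫₀^x (cosh(√t) − 1)/t dt equals −2γ − ln x + 2·Chi(√x), where γ is the Euler–Mascheroni constant and Chi(y) = γ + ln y + ∫₀^y (cosh u − 1)/u du. -/
open Real MeasureTheory
open scoped Nat

lemma aux_integral (b : ℝ) (hb : 0 < b) (c : ℕ → ℝ) (e : ℕ → ℕ) (hc : ∀ k, 0 ≤ c k)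
    (F : ℝ → ℝ)
    (hsum : Summable fun k => c k * b ^ (e k + 1) / (e k + 1))
    (hpt : ∀ t ∈ Set.Ioc (0:ℝ) b, HasSum (fun k => c k * t ^ e k) (F t)) :
    ∫ t in (0:ℝ)..b, F t = ∑' k, c k * b ^ (e k + 1) / (e k + 1) := by
  have hval : ∀ k : ℕ, ∫ t in (0:ℝ)..b, c k * t ^ e k = c k * b ^ (e k + 1) / (e k + 1) := by
    intro k
    rw [intervalIntegral.integral_const_mul, integral_pow]
    rw [zero_pow (by omega)]
    ring
  have hint : ∀ k : ℕ, IntegrableOn (fun t => c k * t ^ e k) (Set.Ioc (0:ℝ) b) volume := by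
    intro k
    exact (Continuous.integrableOn_Ioc (by continuity))
  have hnorm : ∀ k : ℕ, ∫ t in Set.Ioc (0:ℝ) b, ‖c k * t ^ e k‖ =
      c k * b ^ (e k + 1) / (e k + 1) := by
    intro k
    rw [← hval k, intervalIntegral.integral_of_le hb.le]
    apply setIntegral_congr_fun measurableSet_Ioc
    intro t ht
    exact Real.norm_of_nonneg (mul_nonneg (hc k) (pow_nonneg ht.1.le _))
  have key := MeasureTheory.hasSum_integral_of_summable_integral_norm
      (μ := volume.restrict (Set.Ioc (0:ℝ) b)) (F := fun k t => c k * t ^ e k)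
      hint (by simpa only [hnorm] using hsum)
  rw [intervalIntegral.integral_of_le hb.le]
  have : ∫ t in Set.Ioc (0:ℝ) b, F t = ∫ t in Set.Ioc (0:ℝ) b, ∑' k, c k * t ^ e k := by
    apply setIntegral_congr_fun measurableSet_Ioc
    intro t ht
    exact ((hpt t ht).tsum_eq).symm
  rw [this, ← key.tsum_eq]
  apply tsum_congr
  intro k
  rw [← hval k, intervalIntegral.integral_of_le hb.le]

lemma shift_cosh (t : ℝ) : HasSum (fun n : ℕ => t ^ (2 * (n + 1)) / (2 * (n + 1))!) (Real.cosh t - 1) := by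
  have h := Real.hasSum_cosh t
  rw [← hasSum_nat_add_iff' 1] at h
  simpa using h

/-- `Ei₂,₁(x) = 2·Chi(√x) − 2γ − ln x`. -/
theorem integral_mittagLeffler_two_one (x : ℝ) (hx : 0 < x) :
    ((∑' k : ℕ, x ^ (k + 1) / ((k + 1) * Real.Gamma (2 * (k + 1) + 1)))
        = 2 * ∫ t in (0:ℝ)..Real.sqrt x, (Real.cosh t - 1) / t) ∧
    (∫ t in (0:ℝ)..x, (Real.cosh (Real.sqrt t) - 1) / t
        = -2 * Real.eulerMascheroniConstant - Real.log x
          + 2 * (Real.eulerMascheroniConstant + Real.log (Real.sqrt x)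
              + ∫ u in (0:ℝ)..Real.sqrt x, (Real.cosh u - 1) / u)) := by
  have hsx : 0 < Real.sqrt x := Real.sqrt_pos.mpr hx
  have hc : ∀ k : ℕ, (0:ℝ) ≤ 1 / (2 * k + 2)! := fun k => by positivity
  -- integral 1
  have hI1 : (∫ t in (0:ℝ)..Real.sqrt x, (Real.cosh t - 1) / t)
      = ∑' k : ℕ, (1 / ((2 * k + 2)! : ℝ)) * Real.sqrt x ^ (2 * k + 1 + 1) / (((2 * k + 1 : ℕ) : ℝ) + 1) := by
    have hsummable : Summable (fun k : ℕ =>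
        (1 / ((2 * k + 2)! : ℝ)) * Real.sqrt x ^ (2 * k + 1 + 1) / (((2 * k + 1 : ℕ) : ℝ) + 1)) := by
      have hg : Summable (fun k : ℕ => Real.sqrt x ^ (2 * k + 2) / ((2 * k + 2)! : ℝ)) := by
        have := (Real.summable_pow_div_factorial (Real.sqrt x)).comp_injective
          (i := fun k : ℕ => 2 * k + 2) (fun a b (h : 2*a+2 = 2*b+2) => by omega)
        exact this
      refine Summable.of_nonneg_of_le (fun k => by positivity) (fun k => ?_) hg
      have h1 : (1 / ((2 * k + 2)! : ℝ)) * Real.sqrt x ^ (2 * k + 1 + 1) / (((2 * k + 1 : ℕ) : ℝ) + 1)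
          = (Real.sqrt x ^ (2 * k + 2) / (2 * k + 2)!) / (2 * k + 1 + 1) := by
        push_cast; ring
      rw [h1]
      apply div_le_self (by positivity)
      linarith [Nat.cast_nonneg (α := ℝ) k]
    apply aux_integral (Real.sqrt x) hsx _ (fun k => 2 * k + 1) hc _ hsummable
    · intro t ht
      have h := (shift_cosh t).div_const t
      have heq : (fun n : ℕ => t ^ (2 * (n + 1)) / (2 * (n + 1))! / t)
          = fun k : ℕ => (1 / ((2 * k + 2)! : ℝ)) * t ^ (2 * k + 1) := by
        funext n
        have h2 : 2 * (n + 1) = 2 * n + 1 + 1 := by ring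
        rw [h2, pow_succ]
        field_simp [ht.1.ne']
      rwa [heq] at h
  -- integral 2
  have hI2 : (∫ t in (0:ℝ)..x, (Real.cosh (Real.sqrt t) - 1) / t)
      = ∑' k : ℕ, (1 / ((2 * k + 2)! : ℝ)) * x ^ (k + 1) / (k + 1) := by
    have hsummable : Summable (fun k : ℕ =>
        (1 / ((2 * k + 2)! : ℝ)) * x ^ (k + 1) / ((k : ℝ) + 1)) := by
      have hg : Summable (fun k : ℕ => x ^ (k + 1) / ((k + 1)! : ℝ)) := by
        have := (Real.summable_pow_div_factorial x).comp_injective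
          (i := fun k : ℕ => k + 1) (fun a b (h : a+1 = b+1) => by omega)
        exact this
      refine Summable.of_nonneg_of_le (fun k => by positivity) (fun k => ?_) hg
      have h1 : (1 / ((2 * k + 2)! : ℝ)) * x ^ (k + 1) / ((k : ℝ) + 1)
          = x ^ (k + 1) / ((2 * k + 2)! * ((k : ℝ) + 1)) := by
        have h1 : (0:ℝ) < ((2 * k + 2)! : ℝ) := by positivity
        have h2 : (0:ℝ) < (k : ℝ) + 1 := by positivity
        field_simp
      rw [h1]
      apply div_le_div_of_nonneg_left (by positivity) (by positivity)
      calc ((k + 1)! : ℝ) ≤ ((2 * k + 2)! : ℝ) := by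
            exact_mod_cast Nat.factorial_le (by omega)
        _ ≤ (2 * k + 2)! * ((k : ℝ) + 1) := by
            nlinarith [(Nat.cast_pos (α := ℝ)).mpr (Nat.factorial_pos (2 * k + 2)),
              Nat.cast_nonneg (α := ℝ) k]
    apply aux_integral x hx _ (fun k => k) hc _ hsummable
    · intro t ht
      have h := (shift_cosh (Real.sqrt t)).div_const t
      have heq : (fun n : ℕ => Real.sqrt t ^ (2 * (n + 1)) / (2 * (n + 1))! / t)
          = fun k : ℕ => (1 / ((2 * k + 2)! : ℝ)) * t ^ k := by
        funext n
        have h2 : Real.sqrt t ^ (2 * (n + 1)) = t ^ (n + 1) := by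
          rw [pow_mul, Real.sq_sqrt ht.1.le]
        rw [h2, pow_succ]
        have h3 : 2 * (n + 1) = 2 * n + 2 := by ring
        rw [h3]
        field_simp [ht.1.ne']
      rwa [heq] at h
  -- termwise identities
  have hterm : ∀ k : ℕ, x ^ (k + 1) / ((k + 1) * Real.Gamma (2 * (k + 1) + 1))
      = (1 / ((2 * k + 2)! : ℝ)) * x ^ (k + 1) / (k + 1) := by
    intro k
    have hg : Real.Gamma (2 * ((k : ℝ) + 1) + 1) = ((2 * k + 2)! : ℝ) := by
      have : 2 * ((k : ℝ) + 1) + 1 = ((2 * k + 2 : ℕ) : ℝ) + 1 := by push_cast; ring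
      rw [this, Real.Gamma_nat_eq_factorial]
    rw [hg]
    have h1 : (0:ℝ) < ((2 * k + 2)! : ℝ) := by positivity
    have h2 : (0:ℝ) < (k : ℝ) + 1 := by positivity
    field_simp
  have hterm2 : ∀ k : ℕ, (1 / ((2 * k + 2)! : ℝ)) * x ^ (k + 1) / (k + 1)
      = 2 * ((1 / ((2 * k + 2)! : ℝ)) * Real.sqrt x ^ (2 * k + 1 + 1) / (((2 * k + 1 : ℕ) : ℝ) + 1)) := by
    intro k
    have h2 : Real.sqrt x ^ (2 * k + 1 + 1) = x ^ (k + 1) := by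
      have : 2 * k + 1 + 1 = 2 * (k + 1) := by ring
      rw [this, pow_mul, Real.sq_sqrt hx.le]
    rw [h2]
    have h1 : (0:ℝ) < ((2 * k + 2)! : ℝ) := by positivity
    have hk : (0:ℝ) < (k:ℝ) + 1 := by positivity
    field_simp
    push_cast; ring
  have hmain : (∑' k : ℕ, x ^ (k + 1) / ((k + 1) * Real.Gamma (2 * (k + 1) + 1)))
      = 2 * ∫ t in (0:ℝ)..Real.sqrt x, (Real.cosh t - 1) / t := by
    rw [hI1, ← tsum_mul_left]
    apply tsum_congr
    intro k
    rw [hterm k, hterm2 k]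
  refine ⟨hmain, ?_⟩
  have hlog : Real.log (Real.sqrt x) = Real.log x / 2 := Real.log_sqrt hx.le
  have : (∫ t in (0:ℝ)..x, (Real.cosh (Real.sqrt t) - 1) / t)
      = 2 * ∫ u in (0:ℝ)..Real.sqrt x, (Real.cosh u - 1) / u := by
    rw [hI2, hI1, ← tsum_mul_left]
    exact tsum_congr fun k => hterm2 k
  rw [this, hlog]
  ring
end

section
/- Let α ≥ 1 and β > 0 be real numbers and let E_{α,β}(t) = Σ_{k=0}^∞ t^k / Γ(αk+β). Then for every real s > 1, the Laplace transform satisfies ∫₀^∞ e^{−st} E_{α,β}(t) dt = Σ_{k=0}^∞ (k! / Γ(αk+β)) · s^{−(k+1)}, where both the integral and the series converge. -/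
open Real MeasureTheory

/-- Laplace transform of the two-parameter Mittag-Leffler function. -/
theorem laplace_mittagLeffler (α β s : ℝ) (hα : 1 ≤ α) (hβ : 0 < β) (hs : 1 < s) :
    IntegrableOn
      (fun t : ℝ => Real.exp (-(s * t)) * ∑' k : ℕ, t ^ k / Real.Gamma (α * k + β))
      (Set.Ioi 0) ∧
    Summable (fun k : ℕ => (Nat.factorial k : ℝ) / Real.Gamma (α * k + β) / s ^ (k + 1)) ∧
    (∫ t in Set.Ioi (0:ℝ),
        Real.exp (-(s * t)) * ∑' k : ℕ, t ^ k / Real.Gamma (α * k + β))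
      = ∑' k : ℕ, (Nat.factorial k : ℝ) / Real.Gamma (α * k + β) / s ^ (k + 1) := by
  have hs0 : (0:ℝ) < s := lt_trans one_pos hs
  have hα0 : (0:ℝ) < α := lt_of_lt_of_le one_pos hα
  have hgpos : ∀ k : ℕ, 0 < Real.Gamma (α * k + β) := fun k =>
    Real.Gamma_pos_of_pos (by positivity)
  -- key factorial bound
  have key : ∀ k : ℕ, 1 ≤ k → (Nat.factorial k : ℝ) ≤ (α * k + β) * Real.Gamma (α * k + β) := by
    intro k hk
    have hk1 : (1:ℝ) ≤ (k:ℝ) := by exact_mod_cast hk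
    have hz : (0:ℝ) < α * k + β := by positivity
    have h2 : (2:ℝ) ≤ (k:ℝ) + 1 := by linarith
    have h1 : ((k:ℝ)+1) ≤ α * k + β + 1 := by nlinarith
    have hmono := Real.Gamma_strictMonoOn_Ici.monotoneOn (Set.mem_Ici.2 h2)
      (Set.mem_Ici.2 (le_trans h2 h1)) h1
    rw [Real.Gamma_nat_eq_factorial k] at hmono
    rwa [Real.Gamma_add_one hz.ne'] at hmono
  -- everywhere summability of the Mittag-Leffler series
  have hsumm : ∀ t : ℝ, Summable (fun k : ℕ => t ^ k / Real.Gamma (α * k + β)) := by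
    intro t
    apply summable_of_ratio_norm_eventually_le (r := 1/2) (by norm_num)
    filter_upwards [Filter.eventually_ge_atTop ⌈2*|t|+2⌉₊] with k hk
    have hk' : 2*|t|+2 ≤ (k:ℝ) := le_trans (Nat.le_ceil _) (by exact_mod_cast hk)
    have hz : (0:ℝ) < α * k + β := by positivity
    have hzk : 2*|t|+2 ≤ α * k + β := by nlinarith [abs_nonneg t]
    have hz2 : (2:ℝ) ≤ α * k + β + 1 := by nlinarith [abs_nonneg t]
    have h1 : (α * k + β) + 1 ≤ α * (k+1 : ℕ) + β := by push_cast; nlinarith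
    have hmono := Real.Gamma_strictMonoOn_Ici.monotoneOn (Set.mem_Ici.2 hz2)
      (Set.mem_Ici.2 (le_trans hz2 h1)) h1
    rw [Real.Gamma_add_one hz.ne'] at hmono
    -- hmono : (α k + β) * Γ(αk+β) ≤ Γ(α(k+1)+β)
    have hg1 := hgpos k
    have hg2 := hgpos (k+1)
    rw [Real.norm_eq_abs, Real.norm_eq_abs, abs_div, abs_div, abs_pow, abs_pow,
      abs_of_pos hg1, abs_of_pos hg2,
      show (1/2 : ℝ) * (|t| ^ k / Real.Gamma (α * k + β))
        = |t| ^ k / (2 * Real.Gamma (α * k + β)) by ring,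
      div_le_div_iff₀ hg2 (by positivity)]
    have hpow : |t| ^ (k+1) = |t| * |t| ^ k := by rw [pow_succ]; ring
    rw [hpow]
    nlinarith [pow_nonneg (abs_nonneg t) k, abs_nonneg t,
      mul_le_mul_of_nonneg_left hmono (by positivity : (0:ℝ) ≤ |t| ^ k),
      mul_le_mul_of_nonneg_right hzk (mul_nonneg (pow_nonneg (abs_nonneg t) k) hg1.le)]
  -- integrability of each base function
  have hbase : ∀ k : ℕ, IntegrableOn (fun t : ℝ => t ^ k * Real.exp (-(s*t))) (Set.Ioi 0) := by
    intro k
    have h := integrableOn_rpow_mul_exp_neg_mul_rpow (p := 1) (s := (k:ℝ)) (b := s)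
      (lt_of_lt_of_le neg_one_lt_zero (Nat.cast_nonneg k)) one_pos hs0
    apply h.congr_fun ?_ measurableSet_Ioi
    intro x hx
    show x ^ ((k:ℝ)) * Real.exp (-s * x ^ (1:ℝ)) = x ^ k * Real.exp (-(s*x))
    rw [Real.rpow_natCast, Real.rpow_one, neg_mul]
  -- value of the base integral
  have hval : ∀ k : ℕ, ∫ t in Set.Ioi (0:ℝ), t ^ k * Real.exp (-(s*t))
      = (Nat.factorial k : ℝ) / s ^ (k+1) := by
    intro k
    have h := integral_rpow_mul_exp_neg_mul_Ioi (a := (k:ℝ)+1) (r := s) (by positivity) hs0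
    rw [add_sub_cancel_right] at h
    rw [Real.Gamma_nat_eq_factorial k] at h
    rw [show ((k:ℝ)+1) = ((k+1:ℕ):ℝ) by push_cast; ring, Real.rpow_natCast] at h
    have hcong : ∫ t in Set.Ioi (0:ℝ), t ^ ((k:ℝ)) * Real.exp (-(s*t))
        = ∫ t in Set.Ioi (0:ℝ), t ^ k * Real.exp (-(s*t)) :=
      setIntegral_congr_fun measurableSet_Ioi (fun t ht => by rw [Real.rpow_natCast])
    rw [hcong] at h
    rw [h, one_div, inv_pow]
    rw [inv_mul_eq_div]
  -- per-term integrability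
  have hFint : ∀ k : ℕ, Integrable
      (fun t : ℝ => Real.exp (-(s*t)) * (t ^ k / Real.Gamma (α * k + β)))
      (volume.restrict (Set.Ioi 0)) := by
    intro k
    refine IntegrableOn.congr_fun ((hbase k).div_const (Real.Gamma (α * k + β)))
      (fun t ht => by ring) measurableSet_Ioi
  -- per-term integral value
  have hIval : ∀ k : ℕ,
      (∫ t in Set.Ioi (0:ℝ), Real.exp (-(s*t)) * (t ^ k / Real.Gamma (α * k + β)))
      = (Nat.factorial k : ℝ) / Real.Gamma (α * k + β) / s ^ (k+1) := by
    intro k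
    rw [show (∫ t in Set.Ioi (0:ℝ), Real.exp (-(s*t)) * (t ^ k / Real.Gamma (α * k + β)))
        = ∫ t in Set.Ioi (0:ℝ), (t ^ k * Real.exp (-(s*t))) / Real.Gamma (α * k + β) from
      setIntegral_congr_fun measurableSet_Ioi (fun t ht => by ring),
      integral_div, hval k, div_right_comm]
  -- norm integral value
  have hnormval : ∀ k : ℕ, (∫ t in Set.Ioi (0:ℝ),
      ‖Real.exp (-(s*t)) * (t ^ k / Real.Gamma (α * k + β))‖)
      = (Nat.factorial k : ℝ) / Real.Gamma (α * k + β) / s ^ (k+1) := by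
    intro k
    rw [show (∫ t in Set.Ioi (0:ℝ), ‖Real.exp (-(s*t)) * (t ^ k / Real.Gamma (α * k + β))‖)
        = ∫ t in Set.Ioi (0:ℝ), Real.exp (-(s*t)) * (t ^ k / Real.Gamma (α * k + β)) from
      setIntegral_congr_fun measurableSet_Ioi (fun t ht => by
        have ht' : 0 < t := ht
        have := hgpos k
        exact Real.norm_of_nonneg (by positivity)), hIval k]
  -- summability
  have hr : ‖(1/s : ℝ)‖ < 1 := by
    rw [Real.norm_eq_abs, abs_of_pos (by positivity), div_lt_one hs0]; exact hs
  have h1 : Summable (fun k : ℕ => (k:ℝ) * (1/s)^k) := by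
    simpa using summable_pow_mul_geometric_of_norm_lt_one 1 hr
  have h2 : Summable (fun k : ℕ => (1/s:ℝ)^k) := summable_geometric_of_norm_lt_one hr
  have hb' : Summable (fun k : ℕ => (α * k + β) * (1/s)^(k+1)) := by
    have h3 := ((h1.mul_left α).add (h2.mul_left β)).mul_left (1/s)
    refine h3.congr fun k => ?_
    ring
  have hSa : Summable (fun k : ℕ =>
      (Nat.factorial k : ℝ) / Real.Gamma (α * k + β) / s ^ (k + 1)) := by
    rw [← summable_nat_add_iff 1]
    refine Summable.of_nonneg_of_le (fun k => by positivity)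
      (fun k => ?_) ((summable_nat_add_iff 1).2 hb')
    have hkey := key (k+1) (Nat.le_add_left 1 k)
    have hgp := hgpos (k+1)
    calc (Nat.factorial (k+1) : ℝ) / Real.Gamma (α * (k+1:ℕ) + β) / s ^ (k+1+1)
        ≤ (α * (k+1:ℕ) + β) / s ^ (k+1+1) := by
          gcongr
          rw [div_le_iff₀ hgp]
          exact hkey
      _ = (α * (k+1:ℕ) + β) * (1/s) ^ (k+1+1) := by
          rw [one_div, inv_pow, div_eq_mul_inv]
  have hnormsum : Summable (fun k : ℕ => ∫ t in Set.Ioi (0:ℝ),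
      ‖Real.exp (-(s*t)) * (t ^ k / Real.Gamma (α * k + β))‖) :=
    hSa.congr fun k => (hnormval k).symm
  -- exchange of sum and integral
  have heq := MeasureTheory.integral_tsum_of_summable_integral_norm
    (F := fun (k : ℕ) (t : ℝ) => Real.exp (-(s*t)) * (t ^ k / Real.Gamma (α * k + β)))
    (μ := volume.restrict (Set.Ioi 0)) hFint hnormsum
  -- measurability of the Mittag-Leffler function
  have hmeasE : Measurable (fun t : ℝ => ∑' k : ℕ, t ^ k / Real.Gamma (α * k + β)) := by
    apply measurable_of_tendsto_metrizable'
      (f := fun n : ℕ => fun t : ℝ => ∑ k ∈ Finset.range n, t ^ k / Real.Gamma (α * k + β))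
      Filter.atTop
    · intro n
      exact Finset.measurable_sum _ fun k _ => (measurable_id.pow_const k).div_const _
    · exact tendsto_pi_nhds.2 fun t => (hsumm t).hasSum.tendsto_sum_nat
  have hASM : AEStronglyMeasurable
      (fun t : ℝ => Real.exp (-(s * t)) * ∑' k : ℕ, t ^ k / Real.Gamma (α * k + β))
      (volume.restrict (Set.Ioi 0)) :=
    ((Real.measurable_exp.comp (measurable_const.mul measurable_id).neg).mul
      hmeasE).aestronglyMeasurable
  -- integrability of the full integrand
  have hnn : 0 ≤ᵐ[volume.restrict (Set.Ioi 0)]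
      (fun t : ℝ => Real.exp (-(s * t)) * ∑' k : ℕ, t ^ k / Real.Gamma (α * k + β)) := by
    refine (ae_restrict_mem measurableSet_Ioi).mono fun t ht => ?_
    have ht' : (0:ℝ) < t := ht
    exact mul_nonneg (Real.exp_pos _).le (tsum_nonneg fun k => by positivity)
  have hInt : IntegrableOn
      (fun t : ℝ => Real.exp (-(s * t)) * ∑' k : ℕ, t ^ k / Real.Gamma (α * k + β))
      (Set.Ioi 0) := by
    refine ⟨hASM, ?_⟩
    rw [hasFiniteIntegral_iff_ofReal hnn]
    calc ∫⁻ t in Set.Ioi (0:ℝ), ENNReal.ofReal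
            (Real.exp (-(s * t)) * ∑' k : ℕ, t ^ k / Real.Gamma (α * k + β))
        = ∫⁻ t in Set.Ioi (0:ℝ),
            ∑' k : ℕ, ENNReal.ofReal (Real.exp (-(s*t)) * (t ^ k / Real.Gamma (α * k + β))) := by
          refine lintegral_congr_ae ((ae_restrict_mem measurableSet_Ioi).mono fun t ht => ?_)
          have ht' : (0:ℝ) < t := ht
          dsimp only
          rw [show Real.exp (-(s*t)) * ∑' k : ℕ, t ^ k / Real.Gamma (α * k + β)
              = ∑' k : ℕ, Real.exp (-(s*t)) * (t ^ k / Real.Gamma (α * k + β)) from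
            tsum_mul_left.symm,
            ENNReal.ofReal_tsum_of_nonneg (fun k => by positivity) ((hsumm t).mul_left _)]
      _ = ∑' k : ℕ, ∫⁻ t in Set.Ioi (0:ℝ),
            ENNReal.ofReal (Real.exp (-(s*t)) * (t ^ k / Real.Gamma (α * k + β))) := by
          refine lintegral_tsum fun k => ?_
          exact (ENNReal.measurable_ofReal.comp
            ((Real.measurable_exp.comp (measurable_const.mul measurable_id).neg).mul
              ((measurable_id.pow_const k).div_const _))).aemeasurable
      _ = ∑' k : ℕ, ENNReal.ofReal
            ((Nat.factorial k : ℝ) / Real.Gamma (α * k + β) / s ^ (k+1)) := by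
          refine tsum_congr fun k => ?_
          rw [← MeasureTheory.ofReal_integral_eq_lintegral_ofReal (hFint k)
            ((ae_restrict_mem measurableSet_Ioi).mono fun t ht => by
              have ht' : (0:ℝ) < t := ht
              have := hgpos k
              positivity), hIval k]
      _ = ENNReal.ofReal (∑' k : ℕ,
            (Nat.factorial k : ℝ) / Real.Gamma (α * k + β) / s ^ (k+1)) :=
          (ENNReal.ofReal_tsum_of_nonneg (fun k => by positivity) hSa).symm
      _ < ⊤ := ENNReal.ofReal_lt_top
  refine ⟨hInt, hSa, ?_⟩
  rw [show (∫ t in Set.Ioi (0:ℝ),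
        Real.exp (-(s * t)) * ∑' k : ℕ, t ^ k / Real.Gamma (α * k + β))
      = ∫ t in Set.Ioi (0:ℝ),
        ∑' k : ℕ, Real.exp (-(s*t)) * (t ^ k / Real.Gamma (α * k + β)) from
    setIntegral_congr_fun measurableSet_Ioi fun t ht => tsum_mul_left.symm, ← heq]
  exact tsum_congr fun k => hIval k
end

section
/- Let α ≥ 1 and β > 0 be real numbers and let Ei_{α,β}(x) = ∫₀^x (E_{α,β}(t) − 1/Γ(β))/t dt, where E_{α,β}(t) = Σ_{k=0}^∞ t^k / Γ(αk+β). Then for every real s > 1, ∫₀^∞ e^{−st} Ei_{α,β}(t) dt = Σ_{k=1}^∞ ((k−1)! / Γ(αk+β)) · s^{−(k+1)}, where both the integral and the series converge. -/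
open Real MeasureTheory
open Set Nat

section ML
variable {α β s : ℝ}

lemma ml_gamma_pos (hα : 1 ≤ α) (hβ : 0 < β) (k : ℕ) :
    0 < Real.Gamma (α * (k + 1) + β) := by
  apply Real.Gamma_pos_of_pos
  have h : (0:ℝ) ≤ (k:ℝ) := Nat.cast_nonneg k
  nlinarith

lemma ml_fact_le (hα : 1 ≤ α) (hβ : 0 < β) {k : ℕ} (hk : 1 ≤ k) :
    (k ! : ℝ) ≤ Real.Gamma (α * (k + 1) + β) := by
  have hk' : (1:ℝ) ≤ (k:ℝ) := by exact_mod_cast hk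
  have h1 : ((k:ℝ) + 1) ∈ Set.Ici (2:ℝ) := by
    simp only [Set.mem_Ici]; linarith
  have hle : ((k:ℝ) + 1) ≤ α * (k + 1) + β := by nlinarith
  have h2 : (α * (k + 1) + β) ∈ Set.Ici (2:ℝ) := by
    simp only [Set.mem_Ici]; linarith [h1.out]
  calc (k ! : ℝ) = Real.Gamma ((k:ℝ) + 1) := (Real.Gamma_nat_eq_factorial k).symm
    _ ≤ Real.Gamma (α * (k + 1) + β) :=
        Real.Gamma_strictMonoOn_Ici.monotoneOn h1 h2 hle

lemma ml_ratio_le (hα : 1 ≤ α) (hβ : 0 < β) (k : ℕ) :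
    (k ! : ℝ) / Real.Gamma (α * (k + 1) + β) ≤ max 1 (1 / Real.Gamma (α + β)) := by
  rcases Nat.eq_zero_or_pos k with rfl | hk
  · have : α * ((0:ℕ) + 1) + β = α + β := by push_cast; ring
    rw [this]
    simpa using le_max_right (1:ℝ) (1 / Real.Gamma (α + β))
  · refine le_trans ?_ (le_max_left _ _)
    rw [div_le_one (ml_gamma_pos hα hβ k)]
    exact ml_fact_le hα hβ hk

lemma ml_summable_target (hα : 1 ≤ α) (hβ : 0 < β) (hs : 1 < s) :
    Summable (fun k : ℕ =>
      (Nat.factorial k : ℝ) / Real.Gamma (α * (k + 1) + β) / s ^ (k + 2)) := by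
  have hs0 : (0:ℝ) < s := by linarith
  set C := max 1 (1 / Real.Gamma (α + β)) with hC
  have hC0 : (0:ℝ) ≤ C := le_trans zero_le_one (le_max_left _ _)
  refine Summable.of_nonneg_of_le (fun k => ?_) (fun k => ?_)
      (Summable.mul_left (C / s ^ 2) (summable_geometric_of_lt_one (r := 1/s) (by positivity)
        (by rw [div_lt_one hs0]; linarith)))
  · have := (ml_gamma_pos hα hβ k)
    positivity
  · calc (Nat.factorial k : ℝ) / Real.Gamma (α * (k + 1) + β) / s ^ (k + 2)
        ≤ C / s ^ (k + 2) := by gcongr; exact ml_ratio_le hα hβ k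
      _ = C / s ^ 2 * (1 / s) ^ k := by
          rw [div_pow, one_pow, pow_add]; ring

lemma ml_summable_c (hα : 1 ≤ α) (hβ : 0 < β) {u : ℝ} (hu : 0 ≤ u) :
    Summable (fun k : ℕ => u ^ k / Real.Gamma (α * (k + 1) + β)) := by
  set C := max 1 (1 / Real.Gamma (α + β)) with hC
  have hC0 : (0:ℝ) ≤ C := le_trans zero_le_one (le_max_left _ _)
  refine Summable.of_nonneg_of_le (fun k => ?_) (fun k => ?_)
      (Summable.mul_left C (Real.summable_pow_div_factorial u))
  · have := ml_gamma_pos hα hβ k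
    positivity
  · have hg := ml_gamma_pos hα hβ k
    have hf : (0:ℝ) < (k ! : ℝ) := by exact_mod_cast Nat.factorial_pos k
    calc u ^ k / Real.Gamma (α * (k + 1) + β)
        = (u ^ k / (k ! : ℝ)) * ((k ! : ℝ) / Real.Gamma (α * (k + 1) + β)) := by
          field_simp
      _ ≤ (u ^ k / (k ! : ℝ)) * C := by
          apply mul_le_mul_of_nonneg_left (ml_ratio_le hα hβ k) (by positivity)
      _ = C * (u ^ k / (k ! : ℝ)) := mul_comm _ _

lemma ml_summable_E (hα : 1 ≤ α) (hβ : 0 < β) {u : ℝ} (hu : 0 ≤ u) :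
    Summable (fun k : ℕ => u ^ k / Real.Gamma (α * k + β)) := by
  rw [← summable_nat_add_iff 1]
  exact ((ml_summable_c hα hβ hu).mul_left u).congr
    (fun n => by push_cast; rw [pow_succ]; ring)

lemma ml_inner_eq (hα : 1 ≤ α) (hβ : 0 < β) {u : ℝ} (hu : 0 < u) :
    ((∑' k : ℕ, u ^ k / Real.Gamma (α * k + β)) - 1 / Real.Gamma β) / u
      = ∑' k : ℕ, u ^ k / Real.Gamma (α * (k + 1) + β) := by
  have hΓβ := Real.Gamma_pos_of_pos hβ
  rw [Summable.tsum_eq_zero_add (ml_summable_E hα hβ hu.le)]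
  simp only [pow_zero, Nat.cast_zero, mul_zero, zero_add, Nat.cast_add, Nat.cast_one,
    one_div]
  rw [add_sub_cancel_left, ← tsum_div_const]
  refine tsum_congr fun n => ?_
  have hΓ := (ml_gamma_pos hα hβ n).ne'
  rw [pow_succ]
  field_simp

lemma ml_summable_a (hα : 1 ≤ α) (hβ : 0 < β) {t : ℝ} (ht : 0 ≤ t) :
    Summable (fun k : ℕ => t ^ (k + 1) / ((k + 1) * Real.Gamma (α * (k + 1) + β))) := by
  refine Summable.of_nonneg_of_le (fun k => ?_) (fun k => ?_)
      ((ml_summable_c hα hβ ht).mul_left t)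
  · have := ml_gamma_pos hα hβ k
    positivity
  · have hg := ml_gamma_pos hα hβ k
    have hk1 : (1:ℝ) ≤ (k:ℝ) + 1 := by have : (0:ℝ) ≤ (k:ℝ) := Nat.cast_nonneg k; linarith
    calc t ^ (k + 1) / (((k:ℝ) + 1) * Real.Gamma (α * (k + 1) + β))
        ≤ t ^ (k + 1) / (1 * Real.Gamma (α * (k + 1) + β)) := by
          gcongr
      _ = t * (t ^ k / Real.Gamma (α * (k + 1) + β)) := by
          rw [one_mul, pow_succ]; ring

lemma ml_inner_integral (hα : 1 ≤ α) (hβ : 0 < β) {t : ℝ} (ht : 0 < t) :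
    (∫ u in (0:ℝ)..t, ((∑' k : ℕ, u ^ k / Real.Gamma (α * k + β)) - 1 / Real.Gamma β) / u)
      = ∑' k : ℕ, t ^ (k + 1) / ((k + 1) * Real.Gamma (α * (k + 1) + β)) := by
  rw [intervalIntegral.integral_of_le ht.le]
  rw [setIntegral_congr_fun measurableSet_Ioc
      (fun u (hu : u ∈ Set.Ioc 0 t) => ml_inner_eq hα hβ hu.1)]
  have hint : ∀ k : ℕ, IntegrableOn (fun u : ℝ => u ^ k / Real.Gamma (α * (k + 1) + β))
      (Set.Ioc 0 t) := fun k => (Continuous.integrableOn_Ioc (by fun_prop))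
  have hval : ∀ k : ℕ, (∫ u in Set.Ioc 0 t, u ^ k / Real.Gamma (α * (k + 1) + β))
      = t ^ (k + 1) / ((k + 1) * Real.Gamma (α * (k + 1) + β)) := by
    intro k
    rw [← intervalIntegral.integral_of_le ht.le, intervalIntegral.integral_div,
      integral_pow]
    rw [zero_pow (Nat.succ_ne_zero k), sub_zero, div_div]
  rw [MeasureTheory.integral_tsum (fun k => (hint k).aestronglyMeasurable) ?_]
  · exact tsum_congr hval
  · have heq : ∀ k : ℕ, (∫⁻ u in Set.Ioc 0 t, ‖u ^ k / Real.Gamma (α * (k + 1) + β)‖ₑ)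
        = ENNReal.ofReal (t ^ (k + 1) / ((k + 1) * Real.Gamma (α * (k + 1) + β))) := by
      intro k
      rw [← ofReal_integral_norm_eq_lintegral_enorm (hint k)]
      congr 1
      rw [setIntegral_congr_fun measurableSet_Ioc (fun u (hu : u ∈ Set.Ioc 0 t) =>
        norm_of_nonneg (by have := ml_gamma_pos hα hβ k; have := hu.1.le; positivity))]
      exact hval k
    simp_rw [heq]
    rw [← ENNReal.ofReal_tsum_of_nonneg
      (fun k => by
        have := ml_gamma_pos hα hβ k
        have h0 : (0:ℝ) ≤ (k:ℝ) := Nat.cast_nonneg k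
        positivity)
      (ml_summable_a hα hβ ht.le)]
    exact ENNReal.ofReal_ne_top

lemma ml_T_integrableOn (hs0 : 0 < s) (c : ℝ) (k : ℕ) :
    IntegrableOn (fun t : ℝ => Real.exp (-(s * t)) * (t ^ (k + 1) / c)) (Set.Ioi 0) := by
  have hbase : IntegrableOn (fun t : ℝ => t ^ (k + 1) * Real.exp (-(s * t))) (Set.Ioi 0) := by
    have h := integrableOn_rpow_mul_exp_neg_mul_rpow (p := 1) (s := ((k + 1 : ℕ) : ℝ)) (b := s)
      (lt_of_lt_of_le neg_one_lt_zero (Nat.cast_nonneg _)) one_pos hs0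
    refine h.congr_fun (fun x hx => ?_) measurableSet_Ioi
    dsimp only
    rw [Real.rpow_one, Real.rpow_natCast, neg_mul]
  have heq : (fun t : ℝ => Real.exp (-(s * t)) * (t ^ (k + 1) / c))
      = fun t : ℝ => (1 / c) * (t ^ (k + 1) * Real.exp (-(s * t))) := by
    funext t; ring
  rw [heq]
  exact hbase.const_mul _

lemma ml_T_integral (hα : 1 ≤ α) (hβ : 0 < β) (hs0 : 0 < s) (k : ℕ) :
    (∫ t in Set.Ioi (0:ℝ),
        Real.exp (-(s * t)) * (t ^ (k + 1) / ((k + 1) * Real.Gamma (α * (k + 1) + β))))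
      = (k ! : ℝ) / Real.Gamma (α * (k + 1) + β) / s ^ (k + 2) := by
  have hg := ml_gamma_pos hα hβ k
  have hk0 : (0:ℝ) ≤ (k:ℝ) := Nat.cast_nonneg k
  have key : (∫ t in Set.Ioi (0:ℝ), t ^ (k + 1) * Real.exp (-(s * t)))
      = (1 / s) ^ (k + 2) * ((k + 1)! : ℝ) := by
    rw [setIntegral_congr_fun measurableSet_Ioi
      (g := fun t : ℝ => t ^ ((k:ℝ) + 2 - 1) * Real.exp (-(s * t)))
      (fun t (ht : t ∈ Set.Ioi (0:ℝ)) => by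
        show t ^ (k + 1) * Real.exp (-(s * t)) = t ^ ((k:ℝ) + 2 - 1) * Real.exp (-(s * t))
        rw [show (k:ℝ) + 2 - 1 = ((k + 1 : ℕ) : ℝ) by push_cast; ring, Real.rpow_natCast])]
    rw [Real.integral_rpow_mul_exp_neg_mul_Ioi (by positivity) hs0]
    rw [show (k:ℝ) + 2 = ((k + 1 : ℕ) : ℝ) + 1 by push_cast; ring,
      Real.Gamma_nat_eq_factorial]
    rw [show (((k + 1 : ℕ) : ℝ) + 1) = ((k + 2 : ℕ) : ℝ) by push_cast; ring,
      Real.rpow_natCast]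
  have h1 : (fun t : ℝ => Real.exp (-(s * t)) * (t ^ (k + 1) / (((k:ℝ) + 1) * Real.Gamma (α * (k + 1) + β))))
      = fun t : ℝ => (1 / (((k:ℝ) + 1) * Real.Gamma (α * (k + 1) + β))) * (t ^ (k + 1) * Real.exp (-(s * t))) := by
    funext t; ring
  rw [h1, integral_const_mul, key]
  have hk1 : ((k:ℝ) + 1) ≠ 0 := by positivity
  rw [show ((k + 1)! : ℝ) = ((k:ℝ) + 1) * (k ! : ℝ) by push_cast [Nat.factorial_succ]; ring]
  have hsne : s ≠ 0 := ne_of_gt hs0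
  field_simp
  rw [← mul_pow, one_div, inv_mul_cancel₀ hsne, one_pow]

lemma ml_T_lintegral (hα : 1 ≤ α) (hβ : 0 < β) (hs0 : 0 < s) (k : ℕ) :
    (∫⁻ t in Set.Ioi (0:ℝ),
        ‖Real.exp (-(s * t)) * (t ^ (k + 1) / ((k + 1) * Real.Gamma (α * (k + 1) + β)))‖ₑ)
      = ENNReal.ofReal ((k ! : ℝ) / Real.Gamma (α * (k + 1) + β) / s ^ (k + 2)) := by
  rw [← ofReal_integral_norm_eq_lintegral_enorm (ml_T_integrableOn hs0 _ k)]
  congr 1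
  rw [setIntegral_congr_fun measurableSet_Ioi (fun t (ht : t ∈ Set.Ioi (0:ℝ)) =>
    norm_of_nonneg (by
      have := ml_gamma_pos hα hβ k
      have h0 : (0:ℝ) < t := ht
      have hk0 : (0:ℝ) ≤ (k:ℝ) := Nat.cast_nonneg k
      positivity))]
  exact ml_T_integral hα hβ hs0 k

end ML

/-- Laplace transform of the integral Mittag-Leffler function. -/
theorem laplace_integral_mittagLeffler (α β s : ℝ) (hα : 1 ≤ α) (hβ : 0 < β) (hs : 1 < s) :
    IntegrableOn
      (fun t : ℝ => Real.exp (-(s * t)) *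
        ∫ u in (0:ℝ)..t,
          ((∑' k : ℕ, u ^ k / Real.Gamma (α * k + β)) - 1 / Real.Gamma β) / u)
      (Set.Ioi 0) ∧
    Summable (fun k : ℕ =>
      (Nat.factorial k : ℝ) / Real.Gamma (α * (k + 1) + β) / s ^ (k + 2)) ∧
    (∫ t in Set.Ioi (0:ℝ),
        Real.exp (-(s * t)) *
          ∫ u in (0:ℝ)..t,
            ((∑' k : ℕ, u ^ k / Real.Gamma (α * k + β)) - 1 / Real.Gamma β) / u)
      = ∑' k : ℕ, (Nat.factorial k : ℝ) / Real.Gamma (α * (k + 1) + β) / s ^ (k + 2) := by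
  have hs0 : (0:ℝ) < s := by linarith
  have hsum := ml_summable_target hα hβ hs
  have hTnn : ∀ (k : ℕ) (t : ℝ), 0 < t →
      0 ≤ Real.exp (-(s * t)) * (t ^ (k + 1) / ((k + 1) * Real.Gamma (α * (k + 1) + β))) := by
    intro k t ht
    have := ml_gamma_pos hα hβ k
    have hk0 : (0:ℝ) ≤ (k:ℝ) := Nat.cast_nonneg k
    positivity
  have hJnn : ∀ k : ℕ,
      0 ≤ (Nat.factorial k : ℝ) / Real.Gamma (α * (k + 1) + β) / s ^ (k + 2) := by
    intro k; have := ml_gamma_pos hα hβ k; positivity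
  have hTsummable : ∀ t : ℝ, 0 ≤ t → Summable (fun k : ℕ =>
      Real.exp (-(s * t)) * (t ^ (k + 1) / ((k + 1) * Real.Gamma (α * (k + 1) + β)))) :=
    fun t ht => (ml_summable_a hα hβ ht).mul_left _
  have hP2 : ∀ t : ℝ, 0 < t →
      (Real.exp (-(s * t)) * ∫ u in (0:ℝ)..t,
        ((∑' k : ℕ, u ^ k / Real.Gamma (α * k + β)) - 1 / Real.Gamma β) / u)
      = ∑' k : ℕ,
          Real.exp (-(s * t)) * (t ^ (k + 1) / ((k + 1) * Real.Gamma (α * (k + 1) + β))) := by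
    intro t ht
    rw [ml_inner_integral hα hβ ht]
    exact tsum_mul_left.symm
  have hlint : ∀ k : ℕ, (∫⁻ t in Set.Ioi (0:ℝ),
      ‖Real.exp (-(s * t)) * (t ^ (k + 1) / ((k + 1) * Real.Gamma (α * (k + 1) + β)))‖₊)
      = ENNReal.ofReal ((Nat.factorial k : ℝ) / Real.Gamma (α * (k + 1) + β) / s ^ (k + 2)) :=
    fun k => ml_T_lintegral hα hβ hs0 k
  have hfin : (∑' k : ℕ, ∫⁻ t in Set.Ioi (0:ℝ),
      ‖Real.exp (-(s * t)) * (t ^ (k + 1) / ((k + 1) * Real.Gamma (α * (k + 1) + β)))‖₊) ≠ ⊤ := by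
    simp_rw [hlint]
    rw [← ENNReal.ofReal_tsum_of_nonneg hJnn hsum]
    exact ENNReal.ofReal_ne_top
  have hTmeas : ∀ k : ℕ, Continuous (fun t : ℝ =>
      Real.exp (-(s * t)) * (t ^ (k + 1) / ((k + 1) * Real.Gamma (α * (k + 1) + β)))) :=
    fun k => by fun_prop
  refine ⟨?_, hsum, ?_⟩
  · set Φ : ℝ → ENNReal := fun t => ∑' k : ℕ, ENNReal.ofReal
        (Real.exp (-(s * t)) * (t ^ (k + 1) / ((k + 1) * Real.Gamma (α * (k + 1) + β)))) with hΦ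
    have hΦmeas : Measurable Φ :=
      Measurable.ennreal_tsum fun k => ((hTmeas k).measurable).ennreal_ofReal
    have hΦlt : (∫⁻ t in Set.Ioi (0:ℝ), Φ t) < ⊤ := by
      rw [hΦ]
      rw [lintegral_tsum fun k => (((hTmeas k).measurable).ennreal_ofReal).aemeasurable]
      have heq : ∀ k : ℕ, (∫⁻ t in Set.Ioi (0:ℝ), ENNReal.ofReal
          (Real.exp (-(s * t)) * (t ^ (k + 1) / ((k + 1) * Real.Gamma (α * (k + 1) + β)))))
          = ∫⁻ t in Set.Ioi (0:ℝ),
            ‖Real.exp (-(s * t)) * (t ^ (k + 1) / ((k + 1) * Real.Gamma (α * (k + 1) + β)))‖ₑ := by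
        intro k
        refine setLIntegral_congr_fun measurableSet_Ioi (fun t ht => ?_)
        rw [Real.enorm_eq_ofReal (hTnn k t ht)]
      simp_rw [heq]
      exact lt_top_iff_ne_top.2 hfin
    have hG : IntegrableOn (fun t => (Φ t).toReal) (Set.Ioi (0:ℝ)) := by
      refine ⟨(hΦmeas.ennreal_toReal).aestronglyMeasurable, ?_⟩
      rw [hasFiniteIntegral_iff_ofReal (ae_of_all _ fun t => ENNReal.toReal_nonneg)]
      refine lt_of_le_of_lt (lintegral_mono fun t => ?_) hΦlt
      exact ENNReal.ofReal_toReal_le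
    refine hG.congr ?_
    refine (ae_restrict_iff' measurableSet_Ioi).2 (ae_of_all _ fun t ht => ?_)
    have ht' : (0:ℝ) < t := ht
    rw [hΦ]
    simp only
    rw [← ENNReal.ofReal_tsum_of_nonneg (fun k => hTnn k t ht') (hTsummable t ht'.le),
      ENNReal.toReal_ofReal (tsum_nonneg fun k => hTnn k t ht')]
    exact (hP2 t ht').symm
  · rw [setIntegral_congr_fun measurableSet_Ioi
      (fun t (ht : t ∈ Set.Ioi (0:ℝ)) => hP2 t ht)]
    rw [MeasureTheory.integral_tsum (fun k => (hTmeas k).aestronglyMeasurable) hfin]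
    exact tsum_congr fun k => ml_T_integral hα hβ hs0 k
end

section
/- For every real x ≥ 0, the Mittag-Leffler function E_{1/2,1} satisfies Σ_{k=0}^∞ x^k / Γ(k/2 + 1) = e^{x²} · (1 + erf(x)), where erf(x) = (2/√π) ∫₀^x e^{−u²} du. -/
open Real intervalIntegral MeasureTheory

lemma gamma_half (n : ℕ) : Real.Gamma ((n:ℝ) + 1/2) = (2*n).factorial * Real.sqrt π / (4^n * n.factorial) := by
  induction n with
  | zero => rw [show ((0:ℕ):ℝ)+1/2 = 1/2 by norm_num, Real.Gamma_one_half_eq]; simp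
  | succ n ih =>
    have h : ((n:ℝ)+1) + 1/2 = ((n:ℝ)+1/2) + 1 := by ring
    push_cast
    rw [h, Real.Gamma_add_one (by positivity), ih]
    have h2 : ((2*(n+1)).factorial : ℝ) = (2*n+2) * ((2*n+1) * (2*n).factorial) := by
      push_cast [show 2*(n+1) = (2*n+1)+1 by ring, Nat.factorial_succ]
      ring
    rw [h2]
    have h3 : ((n+1).factorial : ℝ) = (n+1) * n.factorial := by push_cast [Nat.factorial_succ]; ring
    rw [h3]
    have hn : (n.factorial : ℝ) ≠ 0 := by positivity
    field_simp
    ring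

lemma cont_pow (n : ℕ) : Continuous (fun t : ℝ => (1-t^2)^n) := by fun_prop

lemma I_rec (n : ℕ) :
    (2*(n:ℝ)+3) * ∫ t in (0:ℝ)..1, (1-t^2)^(n+1)
      = (2*(n:ℝ)+2) * ∫ t in (0:ℝ)..1, (1-t^2)^n := by
  have hderiv : ∀ t ∈ Set.uIcc (0:ℝ) 1, HasDerivAt (fun t : ℝ => t*(1-t^2)^(n+1))
      ((2*(n:ℝ)+3)*(1-t^2)^(n+1) - (2*(n:ℝ)+2)*(1-t^2)^n) t := by
    intro t _
    have h1 : HasDerivAt (fun t:ℝ => 1 - t^2) (0 - 2*t) t := by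
      simpa using (hasDerivAt_pow 2 t).const_sub 1
    have h2 := h1.pow (n+1)
    have h3 : HasDerivAt (fun t : ℝ => t*(1-t^2)^(n+1)) _ t := (hasDerivAt_id t).mul h2
    convert h3 using 1
    simp only [Nat.add_sub_cancel, id_eq, Pi.pow_apply]
    push_cast
    ring
  have hint : IntervalIntegrable (fun t : ℝ =>
      (2*(n:ℝ)+3)*(1-t^2)^(n+1) - (2*(n:ℝ)+2)*(1-t^2)^n) MeasureTheory.volume 0 1 := by
    apply Continuous.intervalIntegrable; fun_prop
  have := integral_eq_sub_of_hasDerivAt hderiv hint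
  rw [intervalIntegral.integral_sub (by apply Continuous.intervalIntegrable; fun_prop)
      (by apply Continuous.intervalIntegrable; fun_prop),
    intervalIntegral.integral_const_mul, intervalIntegral.integral_const_mul] at this
  simp at this
  linarith

lemma I_val (n : ℕ) :
    ∫ t in (0:ℝ)..1, (1-t^2)^n = 4^n * (n.factorial:ℝ)^2 / (2*n+1).factorial := by
  induction n with
  | zero => simp
  | succ n ih =>
    have h := I_rec n
    rw [ih] at h
    have h23 : (2*(n:ℝ)+3) ≠ 0 := by positivity
    have hfac : ((2*(n+1)+1).factorial : ℝ) = (2*n+3)*((2*n+2)*(2*n+1).factorial) := by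
      push_cast [show 2*(n+1)+1 = (2*n+1)+1+1 by ring, Nat.factorial_succ]
      ring
    have h3 : ((n+1).factorial : ℝ) = (n+1) * n.factorial := by push_cast [Nat.factorial_succ]; ring
    have hf1 : ((2*n+1).factorial : ℝ) ≠ 0 := by positivity
    rw [eq_div_iff (by positivity), hfac, h3]
    field_simp at h ⊢
    linear_combination 2*h

lemma sub_int (x : ℝ) (n : ℕ) :
    ∫ u in (0:ℝ)..x, (x^2-u^2)^n = x^(2*n+1) * ∫ t in (0:ℝ)..1, (1-t^2)^n := by
  have h := intervalIntegral.smul_integral_comp_mul_left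
    (f := fun u : ℝ => (x^2-u^2)^n) (a := 0) (b := 1) x
  simp only [mul_zero, mul_one, smul_eq_mul] at h
  rw [← h]
  have : ∀ t : ℝ, (x^2-(x*t)^2)^n = x^(2*n) * (1-t^2)^n := by
    intro t
    rw [show x^2-(x*t)^2 = x^2*(1-t^2) by ring, mul_pow, pow_mul]
  simp_rw [this, intervalIntegral.integral_const_mul, pow_succ]
  ring

lemma swap_sum (x : ℝ) (hx : 0 ≤ x) :
    HasSum (fun n : ℕ => (4:ℝ)^n * n.factorial * x^(2*n+1) / (2*n+1).factorial)
      (∫ u in (0:ℝ)..x, Real.exp (x^2 - u^2)) := by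
  rw [intervalIntegral.integral_of_le hx]
  set F : ℕ → ℝ → ℝ := fun n u => (x^2-u^2)^n / n.factorial with hF
  have hcont : ∀ n, Continuous (F n) := by intro n; fun_prop
  have hint : ∀ n, Integrable (F n) (volume.restrict (Set.Ioc 0 x)) := fun n =>
    ((hcont n).integrableOn_Ioc (a := 0) (b := x))
  have hbound : ∀ n, ∫ u in Set.Ioc (0:ℝ) x, ‖F n u‖ ≤ (x^2)^n / n.factorial * x := by
    intro n
    have hle : ∀ u ∈ Set.Ioc (0:ℝ) x, ‖F n u‖ ≤ (x^2)^n / n.factorial := by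
      intro u hu
      rw [hF]
      simp only [norm_div, norm_pow, Real.norm_eq_abs]
      rw [Nat.abs_cast]
      gcongr
      rw [abs_sub_le_iff]
      constructor
      · nlinarith [hu.1, hu.2, sq_nonneg u]
      · nlinarith [hu.1, hu.2, sq_nonneg u, sq_nonneg x]
    calc ∫ u in Set.Ioc (0:ℝ) x, ‖F n u‖
        ≤ ∫ _ in Set.Ioc (0:ℝ) x, (x^2)^n / n.factorial := by
          have hic : IntegrableOn (fun _ : ℝ => (x^2)^n / n.factorial) (Set.Ioc 0 x) volume := by
            refine integrableOn_const ?_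
            rw [Real.volume_Ioc]
            exact ENNReal.ofReal_ne_top
          exact setIntegral_mono_on (hint n).norm hic measurableSet_Ioc hle
      _ = (x^2)^n / n.factorial * x := by
          rw [setIntegral_const, Real.volume_real_Ioc, smul_eq_mul,
            max_eq_left (by linarith)]
          ring
  have hsum : Summable fun n => ∫ u in Set.Ioc (0:ℝ) x, ‖F n u‖ := by
    apply Summable.of_nonneg_of_le (fun n => integral_nonneg (fun u => norm_nonneg _))
      hbound
    exact (Real.summable_pow_div_factorial (x^2)).mul_right x
  have key := MeasureTheory.hasSum_integral_of_summable_integral_norm hint hsum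
  have hexp : ∀ u : ℝ, ∑' n, F n u = Real.exp (x^2 - u^2) := by
    intro u
    rw [Real.exp_eq_exp_ℝ, NormedSpace.exp_eq_tsum_div]
  simp only [hexp] at key
  have key' : HasSum (fun n => ∫ u in Set.Ioc (0:ℝ) x, F n u)
      (∫ u in Set.Ioc (0:ℝ) x, Real.exp (x^2 - u^2)) := key
  convert key' using 2 with n
  rw [show ∫ u in Set.Ioc (0:ℝ) x, F n u = ∫ u in (0:ℝ)..x, F n u from
    (intervalIntegral.integral_of_le hx).symm]
  rw [hF]
  simp only
  rw [intervalIntegral.integral_div, sub_int, I_val]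
  have h1 : ((2*n+1).factorial : ℝ) ≠ 0 := by positivity
  have h2 : (n.factorial : ℝ) ≠ 0 := by positivity
  field_simp

/-- `E_{1/2,1}(x) = e^{x²}(1 + erf x)` for `x ≥ 0`. -/
theorem mittagLeffler_half_one (x : ℝ) (hx : 0 ≤ x) :
    (∑' k : ℕ, x ^ k / Real.Gamma ((k : ℝ) / 2 + 1))
      = Real.exp (x ^ 2) *
        (1 + (2 / Real.sqrt π) * ∫ u in (0:ℝ)..x, Real.exp (-u ^ 2)) := by
  set f : ℕ → ℝ := fun k => x ^ k / Real.Gamma ((k : ℝ) / 2 + 1) with hf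
  have hsqpi : Real.sqrt π ≠ 0 := by positivity
  -- even part
  have he : HasSum (fun n : ℕ => f (2 * n)) (Real.exp (x^2)) := by
    have h0 : HasSum (fun n : ℕ => (x^2)^n / (n.factorial : ℝ)) (NormedSpace.exp (x^2)) :=
      NormedSpace.expSeries_div_hasSum_exp (x^2)
    rw [← Real.exp_eq_exp_ℝ] at h0
    convert h0 using 2 with n
    rw [hf]
    simp only
    rw [show ((2*n : ℕ) : ℝ)/2 + 1 = (n : ℝ) + 1 by push_cast; ring,
      Real.Gamma_nat_eq_factorial, pow_mul]
  -- odd part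
  have ho : HasSum (fun n : ℕ => f (2 * n + 1))
      (Real.exp (x^2) * ((2 / Real.sqrt π) * ∫ u in (0:ℝ)..x, Real.exp (-u ^ 2))) := by
    have h0 : HasSum (fun n : ℕ =>
      2 / Real.sqrt π * ((4:ℝ)^n * n.factorial * x^(2*n+1) / (2*n+1).factorial))
      ((2 / Real.sqrt π) * ∫ u in (0:ℝ)..x, Real.exp (x^2 - u^2)) :=
      (swap_sum x hx).mul_left (2 / Real.sqrt π)
    have hval : (2 / Real.sqrt π) * ∫ u in (0:ℝ)..x, Real.exp (x^2 - u^2)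
        = Real.exp (x^2) * ((2 / Real.sqrt π) * ∫ u in (0:ℝ)..x, Real.exp (-u ^ 2)) := by
      have : ∀ u : ℝ, Real.exp (x^2 - u^2) = Real.exp (x^2) * Real.exp (-u^2) := by
        intro u; rw [← Real.exp_add]; ring_nf
      simp_rw [this, intervalIntegral.integral_const_mul]
      ring
    rw [hval] at h0
    convert h0 using 2 with n
    rw [hf]
    simp only
    rw [show ((2*n+1 : ℕ) : ℝ)/2 + 1 = ((n+1 : ℕ) : ℝ) + 1/2 by push_cast; ring,
      gamma_half]
    have h1 : ((2*(n+1)).factorial : ℝ) = (2*n+2) * (2*n+1).factorial := by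
      push_cast [show 2*(n+1) = (2*n+1)+1 by ring, Nat.factorial_succ]
      ring
    have h2 : ((n+1).factorial : ℝ) = (n+1) * n.factorial := by
      push_cast [Nat.factorial_succ]; ring
    rw [h1, h2]
    have h3 : ((2*n+1).factorial : ℝ) ≠ 0 := by positivity
    have h4 : (n.factorial : ℝ) ≠ 0 := by positivity
    field_simp
    ring
  have := (he.even_add_odd ho).tsum_eq
  rw [hf] at this ⊢
  rw [this]
  ring
end

section
/- For every real s > 0, the Laplace transform of the Mittag-Leffler function E_{2,1}(t) = cosh(√t) satisfies ∫₀^∞ e^{−st} cosh(√t) dt = 1/s + (√π / 2) · s^{−3/2} · e^{1/(4s)} · erf(1/(2√s)), where erf(y) = (2/√π) ∫₀^y e^{−u²} du. -/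
open Real MeasureTheory Set Filter Topology

noncomputable def erf0 (b : ℝ) : ℝ := ∫ u in (0:ℝ)..b, Real.exp (-u^2)

lemma erf0_cont : Continuous (fun u : ℝ => Real.exp (-u^2)) := by fun_prop

lemma erf0_hasDerivAt (b : ℝ) : HasDerivAt erf0 (Real.exp (-b^2)) b := by
  apply intervalIntegral.integral_hasDerivAt_right
  · exact erf0_cont.intervalIntegrable _ _
  · exact erf0_cont.aestronglyMeasurable.stronglyMeasurableAtFilter
  · exact erf0_cont.continuousAt

lemma erf0_neg (b : ℝ) : erf0 (-b) = - erf0 b := by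
  have h : (∫ u in (-b)..(0:ℝ), Real.exp (-u^2)) = ∫ u in (0:ℝ)..b, Real.exp (-u^2) := by
    have := intervalIntegral.integral_comp_neg (a := (0:ℝ)) (b := b) (fun u => Real.exp (-u^2))
    simpa using this.symm
  unfold erf0
  rw [← h, intervalIntegral.integral_symm]

lemma erf0_tendsto :
    Tendsto erf0 atTop (𝓝 (∫ u in Set.Ioi (0:ℝ), Real.exp (-u^2))) := by
  have hint : IntegrableOn (fun u : ℝ => Real.exp (-u^2)) (Set.Ioi 0) := by
    have := integrable_exp_neg_mul_sq (b := 1) one_pos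
    simpa using this.integrableOn
  exact intervalIntegral_tendsto_integral_Ioi 0 hint tendsto_id

/-- Laplace transform of `E₂,₁(t) = cosh √t`. -/
theorem laplace_mittagLeffler_two_one (s : ℝ) (hs : 0 < s) :
    (∫ t in Set.Ioi (0:ℝ), Real.exp (-(s * t)) * Real.cosh (Real.sqrt t))
      = 1 / s + (Real.sqrt π / 2) * s ^ (-(3:ℝ) / 2) * Real.exp (1 / (4 * s)) *
          ((2 / Real.sqrt π) *
            ∫ u in (0:ℝ)..(1 / (2 * Real.sqrt s)), Real.exp (-u ^ 2)) := by
  set a : ℝ := 1 / (2 * s) with ha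
  have hss : Real.sqrt s ≠ 0 := (Real.sqrt_pos.mpr hs).ne'
  have hsq : Real.sqrt s * Real.sqrt s = s := Real.mul_self_sqrt hs.le
  -- step 1 : substitution t = x^2
  have step1 : (∫ t in Set.Ioi (0:ℝ), Real.exp (-(s * t)) * Real.cosh (Real.sqrt t))
      = ∫ x in Set.Ioi (0:ℝ), 2 * x * Real.exp (-(s * x^2)) * Real.cosh x := by
    rw [← MeasureTheory.integral_comp_rpow_Ioi_of_pos
      (g := fun t => Real.exp (-(s * t)) * Real.cosh (Real.sqrt t)) (p := 2) two_pos]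
    apply MeasureTheory.setIntegral_congr_fun measurableSet_Ioi
    intro x hx
    have hx0 : (0:ℝ) < x := hx
    simp only [smul_eq_mul]
    rw [Real.rpow_two, show (2:ℝ) - 1 = 1 by norm_num, Real.rpow_one,
      Real.sqrt_sq hx0.le]
    ring
  set G : ℝ → ℝ := fun x => Real.exp (1/(4*s)) *
      ( -(Real.exp (-(s*(x-a)^2)) + Real.exp (-(s*(x+a)^2)))/(2*s)
        + (a / Real.sqrt s) * (erf0 (Real.sqrt s * (x - a)) - erf0 (Real.sqrt s * (x + a))) )
    with hG
  have hs0 : s ≠ 0 := hs.ne'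
  have h1 : s * a = 1/2 := by rw [ha]; field_simp
  have h2 : 1/(4*s) = a/2 := by rw [ha]; field_simp; ring
  -- key exponential identities
  have key : ∀ x : ℝ, Real.exp (1/(4*s)) * Real.exp (-(s*(x-a)^2))
      = Real.exp (-(s*x^2)) * Real.exp x := by
    intro x
    rw [← Real.exp_add, ← Real.exp_add]
    congr 1
    linear_combination h2 + (2*x - a) * h1
  have key' : ∀ x : ℝ, Real.exp (1/(4*s)) * Real.exp (-(s*(x+a)^2))
      = Real.exp (-(s*x^2)) * Real.exp (-x) := by
    intro x
    rw [← Real.exp_add, ← Real.exp_add]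
    congr 1
    linear_combination h2 + (-(2*x) - a) * h1
  -- step 2 : derivative of G
  have hderiv : ∀ x ∈ Set.Ici (0:ℝ),
      HasDerivAt G (2 * x * Real.exp (-(s * x^2)) * Real.cosh x) x := by
    intro x _
    have dA : HasDerivAt (fun y => Real.exp (-(s*(y-a)^2)))
        (Real.exp (-(s*(x-a)^2)) * (-(2*s*(x-a)))) x := by
      have h := ((((hasDerivAt_id x).sub_const a).pow 2).const_mul s).neg.exp
      convert h using 1
      norm_num
      change _ = Real.exp (-(s*(x-a)^2)) * -(s * (((2:ℕ):ℝ) * (x - a) ^ (2 - 1) * 1))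
      norm_num; ring
    have dB : HasDerivAt (fun y => Real.exp (-(s*(y+a)^2)))
        (Real.exp (-(s*(x+a)^2)) * (-(2*s*(x+a)))) x := by
      have h := ((((hasDerivAt_id x).add_const a).pow 2).const_mul s).neg.exp
      convert h using 1
      norm_num
      change _ = Real.exp (-(s*(x+a)^2)) * -(s * (((2:ℕ):ℝ) * (x + a) ^ (2 - 1) * 1))
      norm_num; ring
    have l1 : HasDerivAt (fun y => Real.sqrt s * (y - a)) (Real.sqrt s) x := by
      simpa using ((hasDerivAt_id x).sub_const a).const_mul (Real.sqrt s)
    have l2 : HasDerivAt (fun y => Real.sqrt s * (y + a)) (Real.sqrt s) x := by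
      simpa using ((hasDerivAt_id x).add_const a).const_mul (Real.sqrt s)
    have dE1 : HasDerivAt (fun y => erf0 (Real.sqrt s * (y - a)))
        (Real.exp (-(s*(x-a)^2)) * Real.sqrt s) x := by
      have h := (erf0_hasDerivAt (Real.sqrt s * (x - a))).comp x l1
      exact h.congr_deriv (by rw [mul_pow, Real.sq_sqrt hs.le])
    have dE2 : HasDerivAt (fun y => erf0 (Real.sqrt s * (y + a)))
        (Real.exp (-(s*(x+a)^2)) * Real.sqrt s) x := by
      have h := (erf0_hasDerivAt (Real.sqrt s * (x + a))).comp x l2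
      exact h.congr_deriv (by rw [mul_pow, Real.sq_sqrt hs.le])
    have dG := ((((dA.add dB).neg).div_const (2*s)).add
      ((dE1.sub dE2).const_mul (a/Real.sqrt s))).const_mul (Real.exp (1/(4*s)))
    refine dG.congr_deriv ?_
    symm
    rw [Real.cosh_eq]
    have k1 := key x
    have k2 := key' x
    field_simp
    rw [show s*x^2 = x^2*s by ring, show 4*s = s*4 by ring] at k1 k2
    linear_combination (-x) * k1 + (-x) * k2
  -- step 3 : limit of G at infinity
  set L : ℝ := ∫ u in Set.Ioi (0:ℝ), Real.exp (-u^2) with hL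
  have hlim : Tendsto G atTop (𝓝 0) := by
    have hatTopm : Tendsto (fun x : ℝ => x - a) atTop atTop :=
      tendsto_atTop_add_const_right _ (-a) tendsto_id
    have hatTopp : Tendsto (fun x : ℝ => x + a) atTop atTop :=
      tendsto_atTop_add_const_right _ a tendsto_id
    have hbotm : Tendsto (fun x : ℝ => Real.exp (-(s*(x-a)^2))) atTop (𝓝 0) := by
      apply Real.tendsto_exp_atBot.comp
      exact tendsto_neg_atTop_atBot.comp
        (((tendsto_pow_atTop two_ne_zero).comp hatTopm).const_mul_atTop hs)
    have hbotp : Tendsto (fun x : ℝ => Real.exp (-(s*(x+a)^2))) atTop (𝓝 0) := by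
      apply Real.tendsto_exp_atBot.comp
      exact tendsto_neg_atTop_atBot.comp
        (((tendsto_pow_atTop two_ne_zero).comp hatTopp).const_mul_atTop hs)
    have herfm : Tendsto (fun x : ℝ => erf0 (Real.sqrt s * (x - a))) atTop (𝓝 L) :=
      erf0_tendsto.comp (hatTopm.const_mul_atTop (Real.sqrt_pos.mpr hs))
    have herfp : Tendsto (fun x : ℝ => erf0 (Real.sqrt s * (x + a))) atTop (𝓝 L) :=
      erf0_tendsto.comp (hatTopp.const_mul_atTop (Real.sqrt_pos.mpr hs))
    have T := ((((hbotm.add hbotp).neg).div_const (2*s)).add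
      ((herfm.sub herfp).const_mul (a/Real.sqrt s))).const_mul (Real.exp (1/(4*s)))
    rw [hG]
    simpa using T
  -- nonnegativity
  have hpos : ∀ x ∈ Set.Ioi (0:ℝ), 0 ≤ 2 * x * Real.exp (-(s * x^2)) * Real.cosh x := by
    intro x hx
    have : (0:ℝ) < x := hx
    positivity
  have main := integral_Ioi_of_hasDerivAt_of_nonneg' hderiv hpos hlim
  rw [step1, main]
  -- step 4 : compute G 0
  have he1 : Real.exp (1/(4*s)) * Real.exp (-(s*a^2)) = 1 := by
    rw [← Real.exp_add,
      show 1/(4*s) + -(s*a^2) = 0 from by linear_combination h2 - a*h1]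
    exact Real.exp_zero
  have hG0 : G 0 = -(1/s) - Real.exp (1/(4*s)) * (1/(s*Real.sqrt s)) * erf0 (Real.sqrt s * a) := by
    rw [hG]
    simp only [zero_sub, zero_add, neg_sq, mul_neg, erf0_neg]
    have hinv : s * s⁻¹ = 1 := mul_inv_cancel₀ hs0
    field_simp
    linear_combination (-2*Real.sqrt s) * he1 +
      (-4*Real.exp (1/(4*s)) * erf0 (a * Real.sqrt s)) * h1
  have hsa : Real.sqrt s * a = 1/(2*Real.sqrt s) := by
    rw [ha, eq_div_iff (by positivity)]
    field_simp
    linear_combination hsq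
  have hrpow : s ^ (-(3:ℝ)/2) = 1/(s * Real.sqrt s) := by
    rw [show (-(3:ℝ)/2) = -(3/2) by norm_num, Real.rpow_neg hs.le,
      show (3:ℝ)/2 = 1 + 1/2 by norm_num, Real.rpow_add hs, Real.rpow_one,
      ← Real.sqrt_eq_rpow]
    rw [one_div]
  have hint : (∫ u in (0:ℝ)..(1 / (2 * Real.sqrt s)), Real.exp (-u ^ 2))
      = erf0 (Real.sqrt s * a) := by
    rw [hsa]; rfl
  rw [hG0, hrpow, hint]
  have hπ : Real.sqrt π ≠ 0 := (Real.sqrt_pos.mpr Real.pi_pos).ne'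
  field_simp
  ring
end

section
/- For every real x, the Wright function W_{−1/2,1} satisfies Σ_{k=0}^∞ x^k / (k! · Γ(1 − k/2)) = 1 + erf(x/2), where erf(y) = (2/√π) ∫₀^y e^{−u²} du and terms with 1 − k/2 a nonpositive integer are interpreted as 0 (the convention 1/Γ(z) = 0 at the poles of Γ). -/
open Real intervalIntegral

lemma gamma_half_sub (m : ℕ) :
    Real.Gamma (1 / 2 - m) =
      (-1) ^ m * 4 ^ m * m.factorial * Real.sqrt π / (2 * m).factorial := by
  induction m with
  | zero =>
    rw [Nat.cast_zero, sub_zero, Real.Gamma_one_half_eq]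
    norm_num
  | succ m ih =>
    have hs : (1 / 2 - (m + 1 : ℕ) : ℝ) ≠ 0 := by
      push_cast; intro h; nlinarith [h]
    have h1 : Real.Gamma ((1 / 2 - (m + 1 : ℕ)) + 1) =
        (1 / 2 - (m + 1 : ℕ)) * Real.Gamma (1 / 2 - (m + 1 : ℕ)) :=
      Real.Gamma_add_one hs
    have h2 : ((1 / 2 - (m + 1 : ℕ) : ℝ)) + 1 = 1 / 2 - m := by push_cast; ring
    rw [h2, ih] at h1
    have hG : Real.Gamma (1 / 2 - (m + 1 : ℕ)) =
        ((-1) ^ m * 4 ^ m * m.factorial * Real.sqrt π / (2 * m).factorial) /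
          (1 / 2 - (m + 1 : ℕ)) := by
      rw [eq_div_iff hs]; rw [h1]; ring
    have hfact : ((2 * (m + 1)).factorial : ℝ) =
        (2 * m + 2) * (2 * m + 1) * (2 * m).factorial := by
      have h3 : 2 * (m + 1) = (2 * m + 1) + 1 := by ring
      rw [h3, Nat.factorial_succ, Nat.factorial_succ]
      push_cast; ring
    have hne : ((2 * m).factorial : ℝ) ≠ 0 := Nat.cast_ne_zero.2 (Nat.factorial_ne_zero _)
    have hs' : (1 / 2 - ((m:ℝ) + 1)) ≠ 0 := by intro h; nlinarith [h]
    push_cast at hG hfact ⊢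
    rw [hG, hfact, Nat.factorial_succ, div_div, div_eq_div_iff
      (by exact mul_ne_zero hne hs')
      (by exact mul_ne_zero (mul_ne_zero (by positivity) (by positivity)) hne)]
    push_cast
    ring

set_option maxHeartbeats 2000000 in
/-- The Wright function `W₋₁/₂,₁(x) = 1 + erf(x/2)`. -/
theorem wright_neg_half_one (x : ℝ) :
    (∑' k : ℕ, x ^ k / (Nat.factorial k * Real.Gamma (1 - (k : ℝ) / 2)))
      = 1 + (2 / Real.sqrt π) * ∫ u in (0:ℝ)..(x / 2), Real.exp (-u ^ 2) := by
  have hpi : Real.sqrt π ≠ 0 := by positivity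
  set t : ℝ := x / 2 with ht
  set F : ℕ → C(ℝ, ℝ) := fun m =>
    ⟨fun u => (-1 : ℝ) ^ m * u ^ (2 * m) / m.factorial, by fun_prop⟩ with hF
  have hnorm : Summable fun m : ℕ =>
      ‖(F m).restrict (⟨Set.uIcc (0:ℝ) t, isCompact_uIcc⟩ : TopologicalSpace.Compacts ℝ)‖ := by
    apply Summable.of_nonneg_of_le (fun m => norm_nonneg _)
      (fun m => ?_) (Real.summable_pow_div_factorial (t ^ 2))
    rw [ContinuousMap.norm_le _ (by positivity)]
    rintro ⟨u, hu⟩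
    have hu' : |u| ≤ |t| := by
      rcases Set.mem_uIcc.1 hu with h | h
      · rw [abs_le]
        exact ⟨le_trans (neg_nonpos_of_nonneg (abs_nonneg t)) h.1,
          le_trans h.2 (le_abs_self t)⟩
      · rw [abs_le]
        exact ⟨le_trans (neg_abs_le t) h.1, le_trans h.2 (abs_nonneg t)⟩
    simp only [ContinuousMap.restrict_apply, hF, ContinuousMap.coe_mk]
    rw [norm_div, norm_mul, norm_pow, norm_pow, norm_neg, norm_one, one_pow, one_mul,
      Real.norm_natCast]
    gcongr
    calc ‖u‖ ^ (2*m) = (‖u‖^2)^m := by rw [← pow_mul]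
      _ ≤ (|t|^2)^m := by
          refine pow_le_pow_left₀ (by positivity) ?_ m
          rw [Real.norm_eq_abs]
          exact pow_le_pow_left₀ (abs_nonneg u) hu' 2
      _ = (t^2)^m := by rw [sq_abs]
  have h1 : HasSum (fun m => ∫ u in (0:ℝ)..t, F m u) (∫ u in (0:ℝ)..t, ∑' m, F m u) :=
    intervalIntegral.hasSum_intervalIntegral_of_summable_norm hnorm
  have hexp : ∀ u : ℝ, (∑' m : ℕ, F m u) = Real.exp (-u^2) := by
    intro u
    rw [Real.exp_eq_exp_ℝ, NormedSpace.exp_eq_tsum_div]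
    refine tsum_congr fun m => ?_
    simp only [hF, ContinuousMap.coe_mk]
    rw [show ((-u^2) : ℝ)^m = (-1)^m * u^(2*m) by rw [neg_pow]; ring]
  have hIval : ∀ m : ℕ, (∫ u in (0:ℝ)..t, F m u)
      = (-1)^m * t^(2*m+1) / ((2*m+1) * m.factorial) := by
    intro m
    simp only [hF, ContinuousMap.coe_mk]
    have : (fun u : ℝ => (-1:ℝ)^m * u^(2*m) / m.factorial)
        = fun u => ((-1:ℝ)^m / m.factorial) * u^(2*m) := funext fun u => by ring
    rw [this, intervalIntegral.integral_const_mul, integral_pow]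
    rw [zero_pow (by omega)]
    have hfac : ((m.factorial : ℝ)) ≠ 0 := Nat.cast_ne_zero.2 (Nat.factorial_ne_zero _)
    have h2m : ((2*m+1 : ℕ) : ℝ) ≠ 0 := by positivity
    push_cast
    push_cast at h2m
    field_simp
    ring_nf
    try exact Or.inl trivial
  have h2 : HasSum
      (fun m : ℕ => (2/Real.sqrt π) * ((-1)^m * t^(2*m+1) / ((2*m+1) * m.factorial)))
      ((2/Real.sqrt π) * ∫ u in (0:ℝ)..t, Real.exp (-u^2)) := by
    have h3 := h1.mul_left (2/Real.sqrt π)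
    have h4 : (∫ u in (0:ℝ)..t, ∑' m : ℕ, F m u) = ∫ u in (0:ℝ)..t, Real.exp (-u^2) :=
      intervalIntegral.integral_congr fun u _ => hexp u
    rw [h4] at h3
    simp only [hIval] at h3
    exact h3
  -- even terms vanish except k = 0
  have heven0 : ∀ k : ℕ, k ≠ 0 →
      x ^ (2*k) / ((Nat.factorial (2*k) : ℝ) * Real.Gamma (1 - ((2*k : ℕ) : ℝ) / 2)) = 0 := by
    intro k hk
    obtain ⟨j, rfl⟩ := Nat.exists_eq_succ_of_ne_zero hk
    have harg : (1 - ((2*(j+1) : ℕ) : ℝ) / 2) = -(j : ℕ) := by push_cast; ring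
    rw [harg, Real.Gamma_neg_nat_eq_zero, mul_zero, div_zero]
  have heven : Summable fun k : ℕ =>
      x ^ (2*k) / ((Nat.factorial (2*k) : ℝ) * Real.Gamma (1 - ((2*k : ℕ) : ℝ) / 2)) := by
    apply summable_of_ne_finset_zero (s := {0})
    intro k hk
    exact heven0 k (by simpa using hk)
  have hoddfun : (fun m : ℕ =>
      x ^ (2*m+1) / ((Nat.factorial (2*m+1) : ℝ) * Real.Gamma (1 - ((2*m+1 : ℕ) : ℝ) / 2)))
      = fun m : ℕ => (2/Real.sqrt π) * ((-1)^m * t^(2*m+1) / ((2*m+1) * m.factorial)) := by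
    funext m
    have harg : (1 - ((2*m+1 : ℕ) : ℝ) / 2) = 1/2 - m := by push_cast; ring
    rw [harg, gamma_half_sub]
    have hfs : ((2*m+1).factorial : ℝ) = (2*m+1) * (2*m).factorial := by
      rw [Nat.factorial_succ]; push_cast; ring
    have hne : ((2 * m).factorial : ℝ) ≠ 0 := Nat.cast_ne_zero.2 (Nat.factorial_ne_zero _)
    have hfac : ((m.factorial : ℝ)) ≠ 0 := Nat.cast_ne_zero.2 (Nat.factorial_ne_zero _)
    have h2m : (2 * (m:ℝ) + 1) ≠ 0 := by positivity
    rw [hfs, ht]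
    rcases Nat.even_or_odd m with he | ho
    · rw [he.neg_one_pow]
      push_cast
      rw [div_pow]
      have h2p : ((2:ℝ))^(2*m+1) = 2 * 4^m := by
        rw [pow_succ, pow_mul]; norm_num; ring
      field_simp [h2p]
      ring_nf; rw [show (2:ℝ)^(m*2) = 4^m by rw [pow_mul']; norm_num]
    · rw [ho.neg_one_pow]
      push_cast
      rw [div_pow]
      have h2p : ((2:ℝ))^(2*m+1) = 2 * 4^m := by
        rw [pow_succ, pow_mul]; norm_num; ring
      field_simp [h2p]
      ring_nf; rw [show (2:ℝ)^(m*2) = 4^m by rw [pow_mul']; norm_num]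
  have hodd : Summable fun m : ℕ =>
      x ^ (2*m+1) / ((Nat.factorial (2*m+1) : ℝ) * Real.Gamma (1 - ((2*m+1 : ℕ) : ℝ) / 2)) := by
    rw [hoddfun]; exact h2.summable
  rw [← tsum_even_add_odd heven hodd]
  congr 1
  · rw [tsum_eq_single 0 (fun k hk => heven0 k hk)]
    simp [Real.Gamma_one]
  · rw [hoddfun, h2.tsum_eq]
end

section
/- For every real x > 0, the integral Wright function Wi_{1,1/2} satisfies Σ_{k=1}^∞ x^k / (k · k! · Γ(k + 1/2)) = (2/√π) ∫₀^{2√x} (cosh t − 1)/t dt. Equivalently, Wi_{1,1/2}(x) = −(2γ + ln 4 + ln x − 2·Chi(2√x))/√π, where γ is the Euler–Mascheroni constant and Chi(y) = γ + ln y + ∫₀^y (cosh u − 1)/u du. -/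
open Real MeasureTheory

private lemma gamma_nat_half (n : ℕ) :
    Real.Gamma ((n : ℝ) + 1 / 2) =
      (Nat.factorial (2 * n) : ℝ) * Real.sqrt π / (4 ^ n * Nat.factorial n) := by
  induction n with
  | zero => simpa using Real.Gamma_one_half_eq
  | succ n ih =>
    have hne : ((n : ℝ) + 1 / 2) ≠ 0 := by positivity
    have h1 : ((n : ℝ) + 1 + 1 / 2) = ((n : ℝ) + 1 / 2) + 1 := by ring
    rw [Nat.cast_succ, h1, Real.Gamma_add_one hne, ih]
    rw [show 2 * (n + 1) = (2 * n + 1) + 1 from by ring, Nat.factorial_succ,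
      Nat.factorial_succ, Nat.factorial_succ]
    have h4 : (4 : ℝ) ^ n ≠ 0 := by positivity
    have hf : ((Nat.factorial n : ℝ)) ≠ 0 := Nat.cast_ne_zero.mpr (Nat.factorial_ne_zero n)
    have hf2 : ((Nat.factorial (2 * n) : ℝ)) ≠ 0 := Nat.cast_ne_zero.mpr (Nat.factorial_ne_zero _)
    push_cast
    field_simp
    ring

private lemma hasSum_coshdiv {t : ℝ} (ht : t ≠ 0) :
    HasSum (fun m : ℕ => t ^ (2 * m + 1) / (Nat.factorial (2 * m + 2) : ℝ))
      ((Real.cosh t - 1) / t) := by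
  have h0 : HasSum (fun n : ℕ => t ^ (2 * (n + 1)) / (Nat.factorial (2 * (n + 1)) : ℝ))
      (Real.cosh t - 1) := by
    rw [hasSum_nat_add_iff (f := fun n : ℕ => t ^ (2 * n) / (Nat.factorial (2 * n) : ℝ)) 1]
    simpa using Real.hasSum_cosh t
  refine (h0.div_const t).congr_fun fun n => ?_
  have hc : ((Nat.factorial (2 * n + 2) : ℝ)) ≠ 0 :=
    Nat.cast_ne_zero.mpr (Nat.factorial_ne_zero _)
  rw [show 2 * (n + 1) = 2 * n + 2 from by ring]
  field_simp
  ring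

/-- `Wi₁,₁/₂(x) = (2·Chi(2√x) − 2γ − ln 4 − ln x)/√π`. -/
theorem integral_wright_one_half (x : ℝ) (hx : 0 < x) :
    ((∑' k : ℕ, x ^ (k + 1) /
        ((k + 1) * Nat.factorial (k + 1) * Real.Gamma ((k : ℝ) + 1 + 1 / 2)))
      = (2 / Real.sqrt π) *
          ∫ t in (0:ℝ)..(2 * Real.sqrt x), (Real.cosh t - 1) / t) ∧
    ((∑' k : ℕ, x ^ (k + 1) /
        ((k + 1) * Nat.factorial (k + 1) * Real.Gamma ((k : ℝ) + 1 + 1 / 2)))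
      = -(2 * Real.eulerMascheroniConstant + Real.log 4 + Real.log x
            - 2 * (Real.eulerMascheroniConstant + Real.log (2 * Real.sqrt x)
                + ∫ u in (0:ℝ)..(2 * Real.sqrt x), (Real.cosh u - 1) / u))
          / Real.sqrt π) := by
  set y : ℝ := 2 * Real.sqrt x with hy_def
  clear_value y
  have hy : 0 < y := by rw [hy_def]; positivity
  -- value of each integral
  have hval : ∀ m : ℕ, (∫ t in Set.Ioc (0:ℝ) y, t ^ (2 * m + 1) / (Nat.factorial (2 * m + 2) : ℝ))
      = y ^ (2 * m + 2) / ((2 * m + 2) * Nat.factorial (2 * m + 2)) := by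
    intro m
    rw [← intervalIntegral.integral_of_le hy.le, intervalIntegral.integral_div, integral_pow]
    rw [show (2 * m + 1) + 1 = 2 * m + 2 from by omega, zero_pow (by omega : 2 * m + 2 ≠ 0)]
    push_cast
    rw [sub_zero, div_div]
    ring_nf
  have hnormval : ∀ m : ℕ,
      (∫ t in Set.Ioc (0:ℝ) y, ‖t ^ (2 * m + 1) / (Nat.factorial (2 * m + 2) : ℝ)‖)
      = y ^ (2 * m + 2) / ((2 * m + 2) * Nat.factorial (2 * m + 2)) := by
    intro m
    rw [← hval m]
    refine setIntegral_congr_fun measurableSet_Ioc fun t ht => ?_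
    exact Real.norm_of_nonneg (div_nonneg (pow_nonneg ht.1.le _) (by positivity))
  -- summability of the integrals
  have hsum0 : Summable (fun m : ℕ => y ^ (2 * m + 2) / ((2 * m + 2) *
      (Nat.factorial (2 * m + 2) : ℝ))) := by
    have hS : Summable (fun n : ℕ => y ^ n / (Nat.factorial n : ℝ)) :=
      Real.summable_pow_div_factorial y
    have hi : Function.Injective (fun m : ℕ => 2 * m + 2) := by
      intro a b h
      simp only at h
      omega
    have hS2 : Summable (fun m : ℕ => y ^ (2 * m + 2) / (Nat.factorial (2 * m + 2) : ℝ)) :=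
      hS.comp_injective hi
    refine Summable.of_nonneg_of_le (fun m => by positivity) (fun m => ?_) hS2
    have hfp : (0:ℝ) < (Nat.factorial (2 * m + 2) : ℝ) := by positivity
    have hm : (0:ℝ) ≤ (m : ℝ) := Nat.cast_nonneg m
    refine div_le_div_of_nonneg_left (by positivity) hfp ?_
    nlinarith
  -- the integral as a sum
  have key : (∫ t in (0:ℝ)..y, (Real.cosh t - 1) / t)
      = ∑' m : ℕ, y ^ (2 * m + 2) / ((2 * m + 2) * (Nat.factorial (2 * m + 2) : ℝ)) := by
    rw [intervalIntegral.integral_of_le hy.le]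
    have hcong : ∀ t ∈ Set.Ioc (0:ℝ) y, (Real.cosh t - 1) / t
        = ∑' m : ℕ, t ^ (2 * m + 1) / (Nat.factorial (2 * m + 2) : ℝ) := fun t ht =>
      (hasSum_coshdiv (ne_of_gt ht.1)).tsum_eq.symm
    rw [setIntegral_congr_fun measurableSet_Ioc hcong]
    rw [← MeasureTheory.integral_tsum_of_summable_integral_norm
      (fun m => ((continuous_pow _).div_const _).integrableOn_Ioc)
      (hsum0.congr fun m => (hnormval m).symm)]
    exact tsum_congr fun m => hval m
  -- termwise identity
  have hterm : ∀ k : ℕ, x ^ (k + 1) /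
      ((k + 1) * Nat.factorial (k + 1) * Real.Gamma ((k : ℝ) + 1 + 1 / 2))
      = (2 / Real.sqrt π) * (y ^ (2 * k + 2) / ((2 * k + 2) * Nat.factorial (2 * k + 2))) := by
    intro k
    have hG : Real.Gamma ((k : ℝ) + 1 + 1 / 2)
        = (Nat.factorial (2 * (k + 1)) : ℝ) * Real.sqrt π /
            (4 ^ (k + 1) * Nat.factorial (k + 1)) := by
      have h := gamma_nat_half (k + 1)
      push_cast at h ⊢
      linarith [h]
    have h1 : y ^ 2 = 4 * x := by
      rw [hy_def, mul_pow, sq_sqrt hx.le]; norm_num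
    have hy2 : y ^ (2 * k + 2) = 4 ^ (k + 1) * x ^ (k + 1) := by
      rw [show 2 * k + 2 = 2 * (k + 1) from by ring, pow_mul, h1, mul_pow]
    rw [hG, hy2, show 2 * (k + 1) = 2 * k + 2 from by ring]
    have hsp : Real.sqrt π ≠ 0 := ne_of_gt (Real.sqrt_pos.mpr Real.pi_pos)
    have hf1 : ((Nat.factorial (k + 1) : ℝ)) ≠ 0 := Nat.cast_ne_zero.mpr (Nat.factorial_ne_zero _)
    have hf2 : ((Nat.factorial (2 * k + 2) : ℝ)) ≠ 0 := Nat.cast_ne_zero.mpr (Nat.factorial_ne_zero _)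
    have hk1 : ((k : ℝ) + 1) ≠ 0 := by positivity
    have h4 : ((4:ℝ) ^ (k + 1)) ≠ 0 := by positivity
    field_simp
  have hmain : (∑' k : ℕ, x ^ (k + 1) /
      ((k + 1) * Nat.factorial (k + 1) * Real.Gamma ((k : ℝ) + 1 + 1 / 2)))
      = (2 / Real.sqrt π) * ∫ t in (0:ℝ)..y, (Real.cosh t - 1) / t := by
    rw [key, tsum_congr hterm, tsum_mul_left]
  refine ⟨hmain, ?_⟩
  rw [hmain]
  have hlog4 : Real.log 4 = 2 * Real.log 2 := by
    rw [show (4:ℝ) = 2 ^ 2 from by norm_num, Real.log_pow]; push_cast; ring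
  have hlogy : Real.log y = Real.log 2 + Real.log x / 2 := by
    rw [hy_def, Real.log_mul two_ne_zero (ne_of_gt (Real.sqrt_pos.mpr hx)), Real.log_sqrt hx.le]
  rw [hlog4, hlogy]
  ring
end

section
/- Let μ > −1/2 be real and define the Whittaker function M_{0,μ}(t) = t^{μ+1/2} e^{−t/2} Σ_{n=0}^∞ ((μ+1/2)_n / ((2μ+1)_n · n!)) t^n for t > 0. Then for every real x > 0, the integral Whittaker function satisfies ∫₀^x M_{0,μ}(t)/t dt = Γ(μ+1) · Σ_{n=0}^∞ x^{2n+μ+1/2} / ( (2n+μ+1/2) · 16^n · n! · Γ(n+μ+1) ). -/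
open Real MeasureTheory Finset

/-- The rising factorial (Pochhammer symbol) on the reals. -/
def risingFactorial (a : ℝ) : ℕ → ℝ
  | 0 => 1
  | n + 1 => risingFactorial a n * (a + n)

/-- The Whittaker function of the first kind `M_{κ,μ}`. -/
noncomputable def whittakerM (κ μ t : ℝ) : ℝ :=
  t ^ (μ + 1 / 2) * Real.exp (-t / 2) *
    ∑' n : ℕ, risingFactorial (μ - κ + 1 / 2) n /
      (risingFactorial (2 * μ + 1) n * Nat.factorial n) * t ^ n

lemma rf_zero (a : ℝ) : risingFactorial a 0 = 1 := rfl
lemma rf_succ (a : ℝ) (n : ℕ) : risingFactorial a (n + 1) = risingFactorial a n * (a + n) := rfl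

lemma rf_pos {a : ℝ} (ha : 0 < a) : ∀ n, 0 < risingFactorial a n
  | 0 => one_pos
  | n + 1 => mul_pos (rf_pos ha n) (by positivity)

lemma rf_le {a : ℝ} (ha : 0 < a) : ∀ n, risingFactorial a n ≤ risingFactorial (2 * a) n
  | 0 => le_refl 1
  | n + 1 => by
    rw [rf_succ, rf_succ]
    have h1 := rf_le ha n
    have h2 := (rf_pos ha n).le
    nlinarith [rf_pos (by linarith : (0:ℝ) < 2*a) n, Nat.cast_nonneg (α := ℝ) n]

noncomputable def dd (j : ℕ) : ℝ := (-(1:ℝ)/2) ^ j / j.factorial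

noncomputable def cc (a : ℝ) (m : ℕ) : ℝ :=
  risingFactorial a m / (risingFactorial (2 * a) m * m.factorial)

noncomputable def SS (a : ℝ) (N : ℕ) : ℝ :=
  ∑ p ∈ Finset.HasAntidiagonal.antidiagonal N, cc a p.1 * dd p.2

lemma dd_zero : dd 0 = 1 := by simp [dd]
lemma dd_succ (j : ℕ) : ((j:ℝ) + 1) * dd (j + 1) = -(1/2) * dd j := by
  have : (j.factorial : ℝ) ≠ 0 := Nat.cast_ne_zero.2 j.factorial_ne_zero
  simp only [dd, pow_succ, Nat.factorial_succ, Nat.cast_mul, Nat.cast_add, Nat.cast_one]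
  field_simp

lemma cc_zero (a : ℝ) : cc a 0 = 1 := by simp [cc, rf_zero]

lemma cc_succ {a : ℝ} (ha : 0 < a) (m : ℕ) :
    ((m:ℝ) + 1) * ((m:ℝ) + 2 * a) * cc a (m + 1) = (a + m) * cc a m := by
  have h1 : risingFactorial (2*a) m ≠ 0 := (rf_pos (by linarith) m).ne'
  have h2 : (m.factorial : ℝ) ≠ 0 := Nat.cast_ne_zero.2 m.factorial_ne_zero
  have h3 : (2*a + m : ℝ) ≠ 0 := by positivity
  simp only [cc, rf_succ, Nat.factorial_succ, Nat.cast_mul, Nat.cast_add, Nat.cast_one]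
  field_simp
  ring

lemma SS_rec {a : ℝ} (ha : 0 < a) (N : ℕ) :
    ((N:ℝ) + 2) * ((N:ℝ) + 1 + 2 * a) * SS a (N + 2) = SS a N / 4 := by
  have hA : ∑ p ∈ antidiagonal (N+2), (p.1 : ℝ) * ((p.1:ℝ) - 1 + 2*a) * (cc a p.1 * dd p.2)
      = ∑ p ∈ antidiagonal (N+1), ((a + p.1) * (cc a p.1 * dd p.2)) := by
    rw [show N + 2 = (N+1) + 1 from rfl, Finset.Nat.sum_antidiagonal_succ]
    simp only [Nat.cast_zero, zero_mul, zero_add]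
    refine Finset.sum_congr rfl fun p _ => ?_
    push_cast
    linear_combination (dd p.2) * cc_succ ha p.1
  have hC : ∑ p ∈ antidiagonal (N+2), 2 * (p.2:ℝ) * ((p.1:ℝ) + a) * (cc a p.1 * dd p.2)
      = -∑ p ∈ antidiagonal (N+1), ((a + p.1) * (cc a p.1 * dd p.2)) := by
    rw [show N + 2 = (N+1) + 1 from rfl, Finset.Nat.sum_antidiagonal_succ',
      ← Finset.sum_neg_distrib]
    simp only [Nat.cast_zero, mul_zero, zero_mul, zero_add]
    refine Finset.sum_congr rfl fun p _ => ?_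
    push_cast
    linear_combination (2 * ((p.1:ℝ) + a) * cc a p.1) * dd_succ p.2
  have hB : ∑ p ∈ antidiagonal (N+2), (p.2:ℝ) * ((p.2:ℝ) - 1) * (cc a p.1 * dd p.2)
      = SS a N / 4 := by
    rw [show N + 2 = (N+1) + 1 from rfl, Finset.Nat.sum_antidiagonal_succ']
    simp only [Nat.cast_zero, zero_mul, mul_zero, zero_add]
    rw [Finset.Nat.sum_antidiagonal_succ']
    simp only [Nat.cast_zero, Nat.cast_one, zero_add, sub_self, mul_zero, zero_mul]
    rw [SS, Finset.sum_div]
    refine Finset.sum_congr rfl fun p _ => ?_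
    have h1 := dd_succ (p.2+1)
    have h2 := dd_succ p.2
    push_cast at h1 h2 ⊢
    linear_combination (cc a p.1 * ((p.2:ℝ)+1)) * h1 + (cc a p.1 * (-(1/2))) * h2
  have expand : ((N:ℝ) + 2) * ((N:ℝ) + 1 + 2 * a) * SS a (N + 2)
      = ∑ p ∈ antidiagonal (N+2),
          ((p.1 : ℝ) * ((p.1:ℝ) - 1 + 2*a) * (cc a p.1 * dd p.2)
            + ((p.2:ℝ) * ((p.2:ℝ) - 1) * (cc a p.1 * dd p.2)
              + 2 * (p.2:ℝ) * ((p.1:ℝ) + a) * (cc a p.1 * dd p.2))) := by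
    rw [SS, Finset.mul_sum]
    refine Finset.sum_congr rfl fun p hp => ?_
    have hmem : ((p.1:ℝ)) = (N:ℝ) + 2 - (p.2:ℝ) := by
      have := Finset.HasAntidiagonal.mem_antidiagonal.mp hp
      have : ((p.1:ℕ) : ℝ) + ((p.2:ℕ) : ℝ) = ((N:ℕ):ℝ) + 2 := by exact_mod_cast congrArg (Nat.cast (R := ℝ)) this
      linarith
    rw [hmem]
    ring
  rw [expand, Finset.sum_add_distrib, Finset.sum_add_distrib, hA, hB, hC]
  ring

lemma SS_zero (a : ℝ) : SS a 0 = 1 := by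
  simp [SS, cc_zero, dd_zero]

lemma cc_one {a : ℝ} (ha : 0 < a) : cc a 1 = 1 / 2 := by
  have : a ≠ 0 := ha.ne'
  simp only [cc, rf_succ, rf_zero, Nat.cast_zero, add_zero, one_mul, Nat.factorial_one,
    Nat.cast_one, mul_one]
  field_simp

lemma SS_one {a : ℝ} (ha : 0 < a) : SS a 1 = 0 := by
  have hanti : (antidiagonal 1 : Finset (ℕ × ℕ)) = {(0, 1), (1, 0)} := rfl
  rw [SS, hanti, Finset.sum_insert (by decide), Finset.sum_singleton]
  have hdd1 : dd 1 = -(1/2) := by norm_num [dd]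
  simp [cc_zero, dd_zero, cc_one ha, hdd1]

lemma SS_odd {a : ℝ} (ha : 0 < a) : ∀ n : ℕ, SS a (2 * n + 1) = 0
  | 0 => SS_one ha
  | n + 1 => by
    have hrec := SS_rec ha (2 * n + 1)
    rw [SS_odd ha n] at hrec
    have h1 : ((2 * n + 1 : ℕ) : ℝ) + 2 ≠ 0 := by positivity
    have h2 : ((2 * n + 1 : ℕ) : ℝ) + 1 + 2 * a ≠ 0 := by positivity
    have h3 : SS a (2 * n + 1 + 2) = 0 := by
      rcases mul_eq_zero.mp (by linarith [hrec] : (((2 * n + 1 : ℕ) : ℝ) + 2) * (((2 * n + 1 : ℕ) : ℝ) + 1 + 2 * a) * SS a (2 * n + 1 + 2) = 0) with h | h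
      · exact absurd h (mul_ne_zero h1 h2)
      · exact h
    calc SS a (2 * (n + 1) + 1) = SS a (2 * n + 1 + 2) := by ring_nf
    _ = 0 := h3

lemma SS_even {a : ℝ} (ha : 0 < a) : ∀ n : ℕ,
    SS a (2 * n) = 1 / (16 ^ n * risingFactorial (a + 1/2) n * n.factorial)
  | 0 => by simp [SS_zero, rf_zero]
  | n + 1 => by
    have hrec := SS_rec ha (2 * n)
    rw [SS_even ha n] at hrec
    have hC : ((2*(n:ℝ)+2) * (2*(n:ℝ)+1+2*a)) ≠ 0 := by positivity
    have heq : SS a (2 * (n + 1)) = SS a (2 * n + 2) := by ring_nf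
    rw [heq]
    have hS : SS a (2*n+2) = 1 / (16 ^ n * risingFactorial (a + 1/2) n * n.factorial) / 4
        / ((2*(n:ℝ)+2) * (2*(n:ℝ)+1+2*a)) := by
      rw [eq_div_iff hC]
      push_cast at hrec
      linear_combination hrec
    rw [hS, div_div, div_div]
    congr 1
    rw [rf_succ, pow_succ, Nat.factorial_succ]
    push_cast
    ring

lemma cc_nonneg {a : ℝ} (ha : 0 < a) (m : ℕ) : 0 ≤ cc a m := by
  have h1 := rf_pos ha m
  have h2 := rf_pos (by linarith : (0:ℝ) < 2*a) m
  have h3 : (0:ℝ) < m.factorial := by exact_mod_cast m.factorial_pos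
  rw [cc]
  exact (div_pos h1 (mul_pos h2 h3)).le

lemma cc_le {a : ℝ} (ha : 0 < a) (m : ℕ) : cc a m ≤ 1 / m.factorial := by
  have h1 := rf_pos ha m
  have h2 := rf_pos (by linarith : (0:ℝ) < 2*a) m
  have h3 : (0:ℝ) < m.factorial := by exact_mod_cast m.factorial_pos
  rw [cc, div_le_div_iff₀ (by positivity) h3]
  have := rf_le ha m
  nlinarith

lemma summable_cc {a : ℝ} (ha : 0 < a) (t : ℝ) :
    Summable (fun m => ‖cc a m * t ^ m‖) := by
  refine ((Real.summable_pow_div_factorial |t|).of_nonneg_of_le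
    (fun _ => norm_nonneg _) (fun m => ?_))
  calc ‖cc a m * t ^ m‖ = cc a m * |t| ^ m := by
        rw [norm_mul, norm_pow, Real.norm_eq_abs, Real.norm_eq_abs,
          abs_of_nonneg (cc_nonneg ha m)]
  _ ≤ (1 / m.factorial) * |t| ^ m :=
        mul_le_mul_of_nonneg_right (cc_le ha m) (by positivity)
  _ = |t| ^ m / m.factorial := by ring

lemma summable_dd (t : ℝ) : Summable (fun j => ‖dd j * t ^ j‖) := by
  refine ((Real.summable_pow_div_factorial (|t|/2)).of_nonneg_of_le
    (fun _ => norm_nonneg _) (fun j => le_of_eq ?_))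
  have habs : |dd j| = (1/2) ^ j / j.factorial := by
    rw [dd, abs_div, abs_pow]
    norm_num
  rw [norm_mul, norm_pow, Real.norm_eq_abs, Real.norm_eq_abs, habs, div_pow]
  rw [div_pow]
  ring

lemma exp_eq_tsum_dd (t : ℝ) : Real.exp (-t/2) = ∑' j, dd j * t ^ j := by
  rw [Real.exp_eq_exp_ℝ, NormedSpace.exp_eq_tsum_div]
  refine tsum_congr fun j => ?_
  rw [dd, show (-t/2 : ℝ) = (-1/2) * t by ring, mul_pow, div_mul_eq_mul_div]

lemma summable_SS {a : ℝ} (ha : 0 < a) (t : ℝ) :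
    Summable (fun N => SS a N * t ^ N) := by
  have h := summable_sum_mul_antidiagonal_of_summable_mul
    (summable_mul_of_summable_norm (summable_cc ha t) (summable_dd t))
  refine h.congr fun N => ?_
  rw [SS, Finset.sum_mul]
  refine Finset.sum_congr rfl fun p hp => ?_
  have hmem := Finset.HasAntidiagonal.mem_antidiagonal.mp hp
  rw [← hmem, pow_add]
  ring

lemma exp_cauchy {a : ℝ} (ha : 0 < a) (t : ℝ) :
    Real.exp (-t/2) * ∑' m, cc a m * t ^ m = ∑' N, SS a N * t ^ N := by
  rw [exp_eq_tsum_dd, mul_comm,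
    tsum_mul_tsum_eq_tsum_sum_antidiagonal_of_summable_norm (summable_cc ha t) (summable_dd t)]
  refine tsum_congr fun N => ?_
  rw [SS, Finset.sum_mul]
  refine Finset.sum_congr rfl fun p hp => ?_
  have hmem := Finset.HasAntidiagonal.mem_antidiagonal.mp hp
  rw [← hmem, pow_add]
  ring

set_option maxHeartbeats 1000000 in
lemma series_even {a : ℝ} (ha : 0 < a) (t : ℝ) :
    ∑' N, SS a N * t ^ N
      = ∑' n : ℕ, 1 / (16 ^ n * risingFactorial (a + 1/2) n * n.factorial) * t ^ (2*n) := by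
  have hsum := summable_SS ha t
  have hinj2 : Function.Injective (fun k : ℕ => 2 * k) :=
    fun x y h => by dsimp only at h; omega
  have hinj2' : Function.Injective (fun k : ℕ => 2 * k + 1) :=
    fun x y h => by dsimp only at h; omega
  have heven : Summable (fun k => SS a (2 * k) * t ^ (2 * k)) := hsum.comp_injective hinj2
  have hodd : Summable (fun k => SS a (2 * k + 1) * t ^ (2 * k + 1)) := hsum.comp_injective hinj2'
  rw [← tsum_even_add_odd (f := fun N => SS a N * t ^ N) heven hodd]
  have h0 : ∑' k : ℕ, SS a (2 * k + 1) * t ^ (2 * k + 1) = 0 := by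
    convert tsum_zero with k
    rw [SS_odd ha k, zero_mul]
  rw [h0, add_zero]
  refine tsum_congr fun n => ?_
  rw [SS_even ha n]

lemma Gamma_rf {x : ℝ} (hx : 0 < x) : ∀ n : ℕ, Real.Gamma (x + n) = risingFactorial x n * Real.Gamma x
  | 0 => by simp [rf_zero]
  | n + 1 => by
    have h : x + (n:ℝ) ≠ 0 := by positivity
    have h2 : (x + ((n+1:ℕ):ℝ)) = (x + n) + 1 := by push_cast; ring
    rw [h2, Real.Gamma_add_one h, Gamma_rf hx n, rf_succ]
    ring

lemma rf_ge {x : ℝ} (hx : 0 < x) : ∀ n : ℕ, min x 1 ≤ risingFactorial x n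
  | 0 => min_le_right x 1
  | 1 => by
    rw [rf_succ, rf_zero]
    simpa using min_le_left x 1
  | (n + 2) => by
    have h := rf_ge hx (n + 1)
    have hpos := rf_pos hx (n + 1)
    rw [rf_succ]
    have hn : (1:ℝ) ≤ x + ((n + 1 : ℕ):ℝ) := by
      push_cast
      linarith [Nat.cast_nonneg (α := ℝ) n]
    nlinarith [min_le_right x 1, lt_min hx one_pos]



lemma integrand_eq {μ : ℝ} (hμ : -(1/2) < μ) {t : ℝ} (ht : 0 < t) :
    whittakerM 0 μ t / t
      = ∑' n : ℕ, Real.Gamma (μ+1) / (16 ^ n * n.factorial * Real.Gamma (n + μ + 1))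
          * t ^ (2 * (n:ℝ) + μ - 1/2) := by
  have ha : 0 < μ + 1/2 := by linarith
  have hμ1 : 0 < μ + 1 := by linarith
  have hw : whittakerM 0 μ t
      = t ^ (μ + 1/2) * Real.exp (-t/2) * ∑' m, cc (μ + 1/2) m * t ^ m := by
    rw [whittakerM, show μ - 0 + 1/2 = μ + 1/2 by ring, show 2*μ+1 = 2*(μ+1/2) by ring]
    norm_num [cc]
  calc whittakerM 0 μ t / t
      = t ^ (μ - 1/2) * ∑' n : ℕ,
          1 / (16 ^ n * risingFactorial (μ + 1) n * n.factorial) * t ^ (2*n) := by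
        rw [hw, mul_assoc, exp_cauchy ha, series_even ha,
          show μ + 1/2 + 1/2 = μ + 1 by ring,
          show μ - 1/2 = (μ + 1/2) - 1 by ring, Real.rpow_sub ht, Real.rpow_one]
        ring
    _ = ∑' n : ℕ, Real.Gamma (μ+1) / (16 ^ n * n.factorial * Real.Gamma (n + μ + 1))
          * t ^ (2 * (n:ℝ) + μ - 1/2) := by
        rw [← tsum_mul_left]
        refine tsum_congr fun n => ?_
        have hG : Real.Gamma ((n:ℝ) + μ + 1) = risingFactorial (μ+1) n * Real.Gamma (μ+1) := by
          rw [show (n:ℝ) + μ + 1 = (μ+1) + n by ring]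
          exact Gamma_rf hμ1 n
        have hc : ((2*n : ℕ):ℝ) = 2*(n:ℝ) := by push_cast; ring
        rw [hG, ← Real.rpow_natCast t (2*n), hc,
          show 2*(n:ℝ) + μ - 1/2 = (μ - 1/2) + 2*(n:ℝ) by ring, Real.rpow_add ht]
        have hΓ : Real.Gamma (μ+1) ≠ 0 := (Real.Gamma_pos_of_pos hμ1).ne'
        have hrf : risingFactorial (μ+1) n ≠ 0 := (rf_pos hμ1 n).ne'
        have hfac : (n.factorial : ℝ) ≠ 0 := Nat.cast_ne_zero.2 n.factorial_ne_zero
        have h16 : (16:ℝ) ^ n ≠ 0 := by positivity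
        field_simp

set_option maxHeartbeats 1000000 in
/-- Series expansion of the integral Whittaker function `Mi₀,μ`. -/
theorem integral_whittaker_zero_mu (μ : ℝ) (hμ : -(1 / 2) < μ) (x : ℝ) (hx : 0 < x) :
    (∫ t in (0:ℝ)..x, whittakerM 0 μ t / t)
      = Real.Gamma (μ + 1) *
          ∑' n : ℕ, x ^ (2 * n + μ + 1 / 2) /
            ((2 * n + μ + 1 / 2) * 16 ^ n * Nat.factorial n * Real.Gamma (n + μ + 1)) := by
  have hμ1 : 0 < μ + 1 := by linarith
  have ha : 0 < μ + 1/2 := by linarith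
  set K : ℕ → ℝ := fun n => Real.Gamma (μ+1) / (16 ^ n * n.factorial * Real.Gamma (n + μ + 1))
    with hK
  set r : ℕ → ℝ := fun n => 2*(n:ℝ) + μ - 1/2 with hr
  have hrneg : ∀ n : ℕ, (-1:ℝ) < r n := fun n => by
    simp only [hr]
    have := Nat.cast_nonneg (α := ℝ) n
    linarith
  have hr1 : ∀ n : ℕ, (0:ℝ) < r n + 1 := fun n => by linarith [hrneg n]
  have hΓpos : 0 < Real.Gamma (μ+1) := Real.Gamma_pos_of_pos hμ1
  have hGn : ∀ n : ℕ, Real.Gamma ((n:ℝ) + μ + 1)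
      = risingFactorial (μ+1) n * Real.Gamma (μ+1) := fun n => by
    rw [show (n:ℝ) + μ + 1 = (μ+1) + n by ring]
    exact Gamma_rf hμ1 n
  have hΓnpos : ∀ n : ℕ, 0 < Real.Gamma ((n:ℝ) + μ + 1) := fun n => by
    rw [hGn n]
    exact mul_pos (rf_pos hμ1 n) hΓpos
  have hKpos : ∀ n, 0 < K n := fun n => by
    have h16 : (0:ℝ) < 16 ^ n := by positivity
    have hfac : (0:ℝ) < n.factorial := by exact_mod_cast n.factorial_pos
    exact div_pos hΓpos (mul_pos (mul_pos h16 hfac) (hΓnpos n))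
  have hint : ∀ n : ℕ, IntegrableOn (fun t : ℝ => K n * t ^ (r n)) (Set.Ioc 0 x) volume := by
    intro n
    have h := (intervalIntegral.intervalIntegrable_rpow' (a := 0) (b := x) (hrneg n)).const_mul (K n)
    rwa [intervalIntegrable_iff, Set.uIoc_of_le hx.le] at h
  have hval : ∀ n : ℕ, (∫ t in Set.Ioc (0:ℝ) x, K n * t ^ (r n))
      = K n * (x ^ (r n + 1) / (r n + 1)) := by
    intro n
    rw [← intervalIntegral.integral_of_le hx.le, intervalIntegral.integral_const_mul,
      integral_rpow (Or.inl (hrneg n)), Real.zero_rpow (hr1 n).ne', sub_zero]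
  have hnorm : ∀ n : ℕ, (∫ t in Set.Ioc (0:ℝ) x, ‖K n * t ^ (r n)‖)
      = K n * (x ^ (r n + 1) / (r n + 1)) := by
    intro n
    rw [← hval n]
    refine setIntegral_congr_fun measurableSet_Ioc fun t ht => ?_
    rw [norm_mul, Real.norm_eq_abs, Real.norm_eq_abs, abs_of_pos (hKpos n),
      abs_of_nonneg (Real.rpow_nonneg ht.1.le _)]
  have hterm : ∀ n : ℕ, K n * (x ^ (r n + 1) / (r n + 1))
      = x ^ (μ+1/2) / ((2*(n:ℝ)+μ+1/2) * risingFactorial (μ+1) n)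
        * ((x^2/16) ^ n / n.factorial) := by
    intro n
    have hx2 : x ^ (r n + 1) = (x^2) ^ n * x ^ (μ+1/2) := by
      rw [show r n + 1 = ((2*n:ℕ):ℝ) + (μ+1/2) by simp only [hr]; push_cast; ring,
        Real.rpow_add hx, Real.rpow_natCast, pow_mul]
    have he : r n + 1 = 2*(n:ℝ)+μ+1/2 := by simp only [hr]; ring
    have hfac : (n.factorial : ℝ) ≠ 0 := Nat.cast_ne_zero.2 n.factorial_ne_zero
    have h16 : (16:ℝ) ^ n ≠ 0 := by positivity
    have hrf : risingFactorial (μ+1) n ≠ 0 := (rf_pos hμ1 n).ne'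
    have hepos : (0:ℝ) < 2*(n:ℝ)+μ+1/2 := he ▸ hr1 n
    have hene : (2*(n:ℝ)+μ+1/2) ≠ 0 := hepos.ne'
    have hΓ : Real.Gamma (μ+1) ≠ 0 := hΓpos.ne'
    have hKsimp : Real.Gamma (μ+1)
        / (16^n * (n.factorial:ℝ) * (risingFactorial (μ+1) n * Real.Gamma (μ+1)))
        = 1 / (16^n * (n.factorial:ℝ) * risingFactorial (μ+1) n) := by
      rw [div_eq_div_iff (mul_ne_zero (mul_ne_zero h16 hfac) (mul_ne_zero hrf hΓ))
        (mul_ne_zero (mul_ne_zero h16 hfac) hrf)]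
      ring
    rw [hK]
    simp only []
    rw [hGn n, hx2, he, hKsimp, div_pow, div_div, div_mul_div_comm, div_mul_div_comm]
    rw [div_eq_div_iff
      (mul_ne_zero (mul_ne_zero (mul_ne_zero h16 hfac) hrf) hene)
      (mul_ne_zero (mul_ne_zero hene hrf) (mul_ne_zero h16 hfac))]
    ring
  have hCpos : (0:ℝ) < (μ+1/2) * min (μ+1) 1 := mul_pos ha (lt_min hμ1 one_pos)
  have hsummable : Summable (fun n : ℕ => K n * (x ^ (r n + 1) / (r n + 1))) := by
    refine Summable.of_nonneg_of_le
      (fun n => mul_nonneg (hKpos n).le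
        (div_nonneg (Real.rpow_nonneg hx.le _) (hr1 n).le))
      (fun n => ?_)
      (((Real.summable_pow_div_factorial (x^2/16)).mul_left
        (x ^ (μ+1/2) / ((μ+1/2) * min (μ+1) 1))))
    rw [hterm n]
    have hq : (0:ℝ) ≤ (x^2/16) ^ n / n.factorial := by positivity
    have hd1 : (0:ℝ) < (μ+1/2) * min (μ+1) 1 := hCpos
    have hd2 : (μ+1/2) * min (μ+1) 1 ≤ (2*(n:ℝ)+μ+1/2) * risingFactorial (μ+1) n := by
      have h1 : (μ+1/2) ≤ 2*(n:ℝ)+μ+1/2 := by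
        have := Nat.cast_nonneg (α := ℝ) n
        linarith
      have h2 : min (μ+1) 1 ≤ risingFactorial (μ+1) n := rf_ge hμ1 n
      have h3 : (0:ℝ) ≤ min (μ+1) 1 := (lt_min hμ1 one_pos).le
      nlinarith [rf_pos hμ1 n]
    gcongr
  calc (∫ t in (0:ℝ)..x, whittakerM 0 μ t / t)
      = ∫ t in Set.Ioc (0:ℝ) x, ∑' n : ℕ, K n * t ^ (r n) := by
        rw [intervalIntegral.integral_of_le hx.le]
        refine setIntegral_congr_fun measurableSet_Ioc fun t ht => ?_
        exact integrand_eq hμ ht.1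
    _ = ∑' n : ℕ, ∫ t in Set.Ioc (0:ℝ) x, K n * t ^ (r n) := by
        refine (integral_tsum_of_summable_integral_norm (fun n => hint n) ?_).symm
        exact hsummable.congr fun n => (hnorm n).symm
    _ = ∑' n : ℕ, K n * (x ^ (r n + 1) / (r n + 1)) := tsum_congr hval
    _ = Real.Gamma (μ + 1) *
          ∑' n : ℕ, x ^ (2 * n + μ + 1 / 2) /
            ((2 * n + μ + 1 / 2) * 16 ^ n * Nat.factorial n * Real.Gamma (n + μ + 1)) := by
        rw [← tsum_mul_left]
        refine tsum_congr fun n => ?_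
        have he : r n + 1 = 2*(n:ℝ)+μ+1/2 := by simp only [hr]; ring
        have hfac : (n.factorial : ℝ) ≠ 0 := Nat.cast_ne_zero.2 n.factorial_ne_zero
        have h16 : (16:ℝ) ^ n ≠ 0 := by positivity
        have hepos : (0:ℝ) < 2*(n:ℝ)+μ+1/2 := he ▸ hr1 n
        have hene : (2*(n:ℝ)+μ+1/2) ≠ 0 := hepos.ne'
        have hΓn := (hΓnpos n).ne'
        rw [hK]
        simp only []
        rw [he]
        field_simp
        try ring
end
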